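/- arXiv:2105.01138 — 8 statements merged into one kernel-verified Lean document; each statement's English description precedes it below -/
import Mathlib

section
/- If S is a cut in a weighted graph G, k>0 an integer, and v a vertex with d_S(v) ≤ (d(v)−k)/2, then the k-fault-tolerant value does not decrease when v is moved: φ(S⊕v, k) ≥ φ(S, k), where φ(S,k) = min over all k-subsets F of V of the cut size of S−F in G−F. -/
open Finset

noncomputable section

variable {V : Type*} [Fintype V] [DecidableEq V]

/-- Total weight of edges crossing the cut `S` (each unordered crossing edge counted once). -/
def cutW (w : V → V → ℝ) (S : Finset V) : ℝ :=
  ∑ u ∈ S, ∑ v ∈ Sᶜ, w u v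

/-- Weighted degree of a vertex. -/
def degW (w : V → V → ℝ) (v : V) : ℝ := ∑ u, w v u

/-- Total weight of crossing edges incident to `v`. -/
def crossDegW (w : V → V → ℝ) (S : Finset V) (v : V) : ℝ :=
  ∑ u, if (v ∈ S ∧ u ∉ S) ∨ (u ∈ S ∧ v ∉ S) then w v u else 0

/-- Total weight of crossing edges incident to at least one vertex of `F`. -/
def crossDegSetW (w : V → V → ℝ) (S F : Finset V) : ℝ :=
  ∑ u ∈ S, ∑ v ∈ Sᶜ, if u ∈ F ∨ v ∈ F then w u v else 0

/-- Weight of edges crossing `S` that avoid `F`: the cut `S − F` in `G − F`. -/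
def cutMinusW (w : V → V → ℝ) (S F : Finset V) : ℝ :=
  ∑ u ∈ S, ∑ v ∈ Sᶜ, if u ∉ F ∧ v ∉ F then w u v else 0

/-- The cut obtained from `S` by moving `v` to the opposite side. -/
def flipCut (S : Finset V) (v : V) : Finset V :=
  if v ∈ S then S.erase v else insert v S

/-- The k-fault-tolerant value of the cut `S` against an adaptive adversary. -/
noncomputable def ftValW (w : V → V → ℝ) (S : Finset V) (k : ℕ) : ℝ :=
  sInf ((fun F => cutMinusW w S F) '' {F : Finset V | F.card = k})

/-- The single-fault FT value of the cut `S`. -/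
noncomputable def ft1W (w : V → V → ℝ) (S : Finset V) : ℝ :=
  sInf (Set.range fun v => cutMinusW w S {v})

/-- Total edge weight of the graph. -/
def totalW (w : V → V → ℝ) : ℝ := (∑ u, ∑ v, w u v) / 2

/-- Maximum weighted degree. -/
noncomputable def maxDegW (w : V → V → ℝ) : ℝ := sSup (Set.range (degW w))

lemma cutMinus_eq (w : V → V → ℝ) (S F : Finset V) :
    cutMinusW w S F =
      ∑ u, ∑ x, (if u ∈ S ∧ x ∉ S ∧ u ∉ F ∧ x ∉ F then w u x else 0) := by
  unfold cutMinusW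
  rw [← Finset.sum_subset (Finset.subset_univ S) (by
    intro u _ hu
    exact Finset.sum_eq_zero fun x _ => by simp [hu])]
  refine Finset.sum_congr rfl fun u hu => ?_
  rw [← Finset.sum_subset (Finset.subset_univ Sᶜ) (by
    intro x _ hx
    simp at hx
    simp [hx])]
  refine Finset.sum_congr rfl fun x hx => ?_
  simp only [Finset.mem_compl] at hx
  simp [hu, hx]

lemma expand_double (f : V → V → ℝ) (v : V) :
    (∑ u, ∑ x, f u x)
      = (∑ x, f v x) + ((∑ u ∈ univ.erase v, f u v)
        + ∑ u ∈ univ.erase v, ∑ x ∈ univ.erase v, f u x) := by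
  rw [← Finset.add_sum_erase univ (fun u => ∑ x, f u x) (Finset.mem_univ v)]
  congr 1
  rw [← Finset.sum_add_distrib]
  exact Finset.sum_congr rfl fun u _ => (Finset.add_sum_erase univ (f u) (Finset.mem_univ v)).symm

lemma key (w : V → V → ℝ) (hsym : ∀ u v, w u v = w v u)
    (h01 : ∀ u v, w u v = 0 ∨ w u v = 1) (hdiag : ∀ v, w v v = 0)
    (S F : Finset V) (v : V) (k : ℕ) (hF : F.card = k)
    (h : crossDegW w S v ≤ (degW w v - k) / 2) :
    cutMinusW w S F ≤ cutMinusW w (flipCut S v) F := by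
  have hw0 : ∀ a b, 0 ≤ w a b := fun a b => by rcases h01 a b with h'|h' <;> simp [h']
  have hw1 : ∀ a b, w a b ≤ 1 := fun a b => by rcases h01 a b with h'|h' <;> simp [h']
  set S' := flipCut S v with hS'def
  have hmem : ∀ u : V, u ≠ v → (u ∈ S' ↔ u ∈ S) := by
    intro u hu
    unfold flipCut at hS'def
    rw [hS'def]
    split_ifs <;> simp [Finset.mem_erase, Finset.mem_insert, hu]
  rw [cutMinus_eq, cutMinus_eq,
    expand_double (fun u x => if u ∈ S ∧ x ∉ S ∧ u ∉ F ∧ x ∉ F then w u x else 0) v,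
    expand_double (fun u x => if u ∈ S' ∧ x ∉ S' ∧ u ∉ F ∧ x ∉ F then w u x else 0) v]
  have hcore : (∑ u ∈ univ.erase v, ∑ x ∈ univ.erase v,
        (if u ∈ S ∧ x ∉ S ∧ u ∉ F ∧ x ∉ F then w u x else 0))
      = ∑ u ∈ univ.erase v, ∑ x ∈ univ.erase v,
        (if u ∈ S' ∧ x ∉ S' ∧ u ∉ F ∧ x ∉ F then w u x else 0) := by
    refine Finset.sum_congr rfl fun u hu => Finset.sum_congr rfl fun x hx => ?_
    rw [Finset.mem_erase] at hu hx
    simp only [hmem u hu.1, hmem x hx.1]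
  simp only [hcore]
  have hmain : (∑ x, (if v ∈ S ∧ x ∉ S ∧ v ∉ F ∧ x ∉ F then w v x else 0))
      + (∑ u ∈ univ.erase v, (if u ∈ S ∧ v ∉ S ∧ u ∉ F ∧ v ∉ F then w u v else 0))
      ≤ (∑ x, (if v ∈ S' ∧ x ∉ S' ∧ v ∉ F ∧ x ∉ F then w v x else 0))
      + (∑ u ∈ univ.erase v, (if u ∈ S' ∧ v ∉ S' ∧ u ∉ F ∧ v ∉ F then w u v else 0)) := by
    by_cases hvF : v ∈ F
    · simp [hvF]
    by_cases hvS : v ∈ S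
    · have hS' : S' = S.erase v := by rw [hS'def]; unfold flipCut; rw [if_pos hvS]
      have hvS' : v ∉ S' := by simp [hS']
      have hcol0 : (∑ u ∈ univ.erase v,
          (if u ∈ S ∧ v ∉ S ∧ u ∉ F ∧ v ∉ F then w u v else 0)) = 0 :=
        Finset.sum_eq_zero fun u _ => by simp [hvS]
      have hrow0 : (∑ x, (if v ∈ S' ∧ x ∉ S' ∧ v ∉ F ∧ x ∉ F then w v x else 0)) = 0 :=
        Finset.sum_eq_zero fun x _ => by simp [hvS']
      rw [hcol0, hrow0, add_zero, zero_add]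
      -- Row S ≤ Col S'
      set A := ∑ u, (if u ∈ S then w v u else 0) with hA
      set B := ∑ u, (if u ∈ S then 0 else w v u) with hB
      set D := ∑ u, (if u ∈ F then w v u else 0) with hD
      have hBA : B + k ≤ A := by
        have h1 : crossDegW w S v = B := by
          unfold crossDegW
          refine Finset.sum_congr rfl fun u _ => ?_
          by_cases hu : u ∈ S <;> simp [hu, hvS]
        have h2 : degW w v = A + B := by
          unfold degW
          rw [hA, hB, ← Finset.sum_add_distrib]
          refine Finset.sum_congr rfl fun u _ => ?_
          split_ifs <;> ring
        rw [h1, h2] at h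
        linarith
      have hDk : D ≤ k := by
        rw [hD, Finset.sum_ite_mem, Finset.univ_inter]
        calc ∑ u ∈ F, w v u ≤ F.card • (1:ℝ) :=
              Finset.sum_le_card_nsmul F _ 1 fun u _ => hw1 v u
          _ = k := by rw [hF]; simp
      have hRowB : (∑ x, (if v ∈ S ∧ x ∉ S ∧ v ∉ F ∧ x ∉ F then w v x else 0)) ≤ B := by
        rw [hB]
        refine Finset.sum_le_sum fun x _ => ?_
        split_ifs with h1 h2 <;> first | exact le_refl _ | exact hw0 _ _ | (exact absurd h2 h1.2.1) | tauto
      have hColFull : (∑ u ∈ univ.erase v, (if u ∈ S' ∧ v ∉ S' ∧ u ∉ F ∧ v ∉ F then w u v else 0))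
          = ∑ u, (if u ∈ S ∧ u ∉ F then w u v else 0) := by
        rw [← Finset.add_sum_erase univ (fun u => if u ∈ S ∧ u ∉ F then w u v else 0)
          (Finset.mem_univ v)]
        have : (if v ∈ S ∧ v ∉ F then w v v else 0) = 0 := by simp [hdiag]
        rw [this, zero_add]
        refine Finset.sum_congr rfl fun u hu => ?_
        rw [Finset.mem_erase] at hu
        simp [hS', Finset.mem_erase, hu.1, hvS', hvF]
      rw [hColFull]
      have hACol : A ≤ (∑ u, (if u ∈ S ∧ u ∉ F then w u v else 0)) + D := by
        rw [hA, hD, ← Finset.sum_add_distrib]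
        refine Finset.sum_le_sum fun u _ => ?_
        by_cases h1 : u ∈ S <;> by_cases h2 : u ∈ F <;>
          simp [h1, h2, hsym u v, hw0, le_refl]
      linarith
    · have hS' : S' = insert v S := by rw [hS'def]; unfold flipCut; rw [if_neg hvS]
      have hvS' : v ∈ S' := by simp [hS']
      have hrow0 : (∑ x, (if v ∈ S ∧ x ∉ S ∧ v ∉ F ∧ x ∉ F then w v x else 0)) = 0 :=
        Finset.sum_eq_zero fun x _ => by simp [hvS]
      have hcol0 : (∑ u ∈ univ.erase v,
          (if u ∈ S' ∧ v ∉ S' ∧ u ∉ F ∧ v ∉ F then w u v else 0)) = 0 :=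
        Finset.sum_eq_zero fun u _ => by simp [hvS']
      rw [hcol0, hrow0, add_zero, zero_add]
      set A := ∑ u, (if u ∈ S then w v u else 0) with hA
      set B := ∑ u, (if u ∈ S then 0 else w v u) with hB
      set D := ∑ u, (if u ∈ F then w v u else 0) with hD
      have hAB : A + k ≤ B := by
        have h1 : crossDegW w S v = A := by
          unfold crossDegW
          refine Finset.sum_congr rfl fun u _ => ?_
          by_cases hu : u ∈ S <;> simp [hu, hvS]
        have h2 : degW w v = A + B := by
          unfold degW
          rw [hA, hB, ← Finset.sum_add_distrib]
          refine Finset.sum_congr rfl fun u _ => ?_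
          split_ifs <;> ring
        rw [h1, h2] at h
        linarith
      have hDk : D ≤ k := by
        rw [hD, Finset.sum_ite_mem, Finset.univ_inter]
        calc ∑ u ∈ F, w v u ≤ F.card • (1:ℝ) :=
              Finset.sum_le_card_nsmul F _ 1 fun u _ => hw1 v u
          _ = k := by rw [hF]; simp
      have hColA : (∑ u ∈ univ.erase v, (if u ∈ S ∧ v ∉ S ∧ u ∉ F ∧ v ∉ F then w u v else 0))
          ≤ A := by
        rw [hA, ← Finset.add_sum_erase univ (fun u => if u ∈ S then w v u else 0)
          (Finset.mem_univ v)]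
        have h0 : (0:ℝ) ≤ if v ∈ S then w v v else 0 := by split_ifs <;> simp [hw0]
        refine le_add_of_nonneg_of_le h0 (Finset.sum_le_sum fun u hu => ?_)
        split_ifs with h1 h2
        · exact le_of_eq (hsym u v)
        · exact absurd h1.1 h2
        · exact hw0 _ _
        · exact le_refl _
      have hBRow : B ≤ (∑ x, (if v ∈ S' ∧ x ∉ S' ∧ v ∉ F ∧ x ∉ F then w v x else 0)) + D := by
        rw [hB, hD, ← Finset.sum_add_distrib]
        refine Finset.sum_le_sum fun x _ => ?_
        by_cases hxv : x = v
        · subst hxv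
          simp [hvS, hdiag]
        · have hxS' : (x ∉ S') ↔ (x ∉ S) := by
            rw [hS']; simp [Finset.mem_insert, hxv]
          by_cases h1 : x ∈ S <;> by_cases h2 : x ∈ F <;>
            simp [h1, h2, hvS', hvF, hxS', hw0, le_refl]
      linarith
  linarith


theorem stmt_2 (w : V → V → ℝ) (hsym : ∀ u v, w u v = w v u)
    (h01 : ∀ u v, w u v = 0 ∨ w u v = 1) (hdiag : ∀ v, w v v = 0)
    (S : Finset V) (v : V) (k : ℕ) (hk : 0 < k) (hkcard : k ≤ Fintype.card V)
    (h : crossDegW w S v ≤ (degW w v - k) / 2) :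
    ftValW w S k ≤ ftValW w (flipCut S v) k := by
  have hne : {F : Finset V | F.card = k}.Nonempty := by
    obtain ⟨F, -, hF⟩ := Finset.exists_subset_card_eq (s := (univ : Finset V)) (n := k) (by simpa using hkcard)
    exact ⟨F, hF⟩
  unfold ftValW
  apply le_csInf (hne.image _)
  rintro b ⟨F, hF, rfl⟩
  calc sInf ((fun F => cutMinusW w S F) '' {F : Finset V | F.card = k})
      ≤ cutMinusW w S F :=
        csInf_le (Set.Finite.bddBelow (Set.toFinite _)) ⟨F, hF, rfl⟩
    _ ≤ cutMinusW w (flipCut S v) F := key w hsym h01 hdiag S F v k hF h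
end
end

section
/- Every unweighted graph G=(V,E) has a k-stable cut S (i.e., for every vertex v, d_S(v) > (d(v)−k)/2) that is an optimal k-adaptive-fault-tolerant cut, i.e., φ(S,k) = max over all cuts S' of φ(S',k). -/
open Finset

noncomputable section

variable {V : Type*} [Fintype V] [DecidableEq V]

-- ===== auxiliary lemmas =====


def crossInd (w : V → V → ℝ) (S : Finset V) (u x : V) : ℝ :=
  if (u ∈ S ∧ x ∉ S) ∨ (x ∈ S ∧ u ∉ S) then w u x else 0

def dInd (w : V → V → ℝ) (S F : Finset V) (u x : V) : ℝ :=
  if u ∉ F ∧ x ∉ F then crossInd w S u x else 0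

lemma crossInd_symm (w : V → V → ℝ) (hsym : ∀ u v, w u v = w v u) (S : Finset V) (u x : V) :
    crossInd w S u x = crossInd w S x u := by
  unfold crossInd
  rw [hsym u x]
  exact if_congr or_comm rfl rfl

lemma dInd_symm (w : V → V → ℝ) (hsym : ∀ u v, w u v = w v u) (S F : Finset V) (u x : V) :
    dInd w S F u x = dInd w S F x u := by
  unfold dInd
  rw [crossInd_symm w hsym S u x]
  exact if_congr and_comm rfl rfl

lemma crossInd_self (w : V → V → ℝ) (S : Finset V) (v : V) : crossInd w S v v = 0 := by
  simp [crossInd]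

lemma sum_dInd (w : V → V → ℝ) (hsym : ∀ u v, w u v = w v u) (S F : Finset V) :
    ∑ u, ∑ x, dInd w S F u x = 2 * cutMinusW w S F := by
  rw [← Finset.sum_add_sum_compl S (fun u => ∑ x, dInd w S F u x)]
  have h1 : ∑ u ∈ S, ∑ x, dInd w S F u x = cutMinusW w S F := by
    unfold cutMinusW
    refine Finset.sum_congr rfl fun u hu => ?_
    have key : ∀ x, dInd w S F u x = if x ∈ Sᶜ then (if u ∉ F ∧ x ∉ F then w u x else 0) else 0 := by
      intro x
      unfold dInd crossInd
      by_cases hx : x ∈ S <;> by_cases hxF : x ∈ F <;> by_cases huF : u ∈ F <;>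
        simp [hx, hu, hxF, huF]
    rw [Finset.sum_congr rfl fun x _ => key x, Finset.sum_ite_mem, Finset.univ_inter]
  have h2 : ∑ u ∈ Sᶜ, ∑ x, dInd w S F u x = cutMinusW w S F := by
    unfold cutMinusW
    have key : ∀ u ∈ Sᶜ, ∑ x, dInd w S F u x
        = ∑ x ∈ S, (if x ∉ F ∧ u ∉ F then w x u else 0) := by
      intro u hu
      rw [Finset.mem_compl] at hu
      have e : ∀ x, dInd w S F u x
          = if x ∈ S then (if x ∉ F ∧ u ∉ F then w x u else 0) else 0 := by
        intro x
        unfold dInd crossInd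
        rw [hsym u x]
        by_cases hx : x ∈ S <;> by_cases hxF : x ∈ F <;> by_cases huF : u ∈ F <;>
          simp [hx, hu, hxF, huF]
      rw [Finset.sum_congr rfl fun x _ => e x, Finset.sum_ite_mem, Finset.univ_inter]
    rw [Finset.sum_congr rfl key, Finset.sum_comm]
  rw [h1, h2]; ring

lemma mem_flipCut_of_ne {S : Finset V} {v t : V} (h : t ≠ v) : t ∈ flipCut S v ↔ t ∈ S := by
  unfold flipCut; split <;> simp [h]

lemma self_mem_flipCut {S : Finset V} {v : V} : v ∈ flipCut S v ↔ v ∉ S := by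
  unfold flipCut; split <;> simp_all

lemma crossInd_flip (w : V → V → ℝ) (hdiag : ∀ v, w v v = 0) (S : Finset V) (v x : V) :
    crossInd w (flipCut S v) v x = w v x - crossInd w S v x := by
  by_cases hx : x = v
  · subst hx; rw [crossInd_self, crossInd_self, hdiag]; ring
  · unfold crossInd
    by_cases hv : v ∈ S <;> by_cases hxS : x ∈ S <;>
      simp [mem_flipCut_of_ne hx, self_mem_flipCut, hv, hxS, hx]

lemma crossInd_flip_other (w : V → V → ℝ) {S : Finset V} {v u x : V} (hu : u ≠ v) (hx : x ≠ v) :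
    crossInd w (flipCut S v) u x = crossInd w S u x := by
  unfold crossInd
  simp [mem_flipCut_of_ne hu, mem_flipCut_of_ne hx]

lemma cutMinus_flip (w : V → V → ℝ) (hsym : ∀ u v, w u v = w v u) (hdiag : ∀ v, w v v = 0)
    (S F : Finset V) (v : V) (hv : v ∉ F) :
    cutMinusW w (flipCut S v) F
      = cutMinusW w S F + ∑ x, (if x ∉ F then w v x - 2 * crossInd w S v x else 0) := by
  have hD : ∑ u, ∑ x, (dInd w (flipCut S v) F u x - dInd w S F u x)
      = 2 * ∑ x, (if x ∉ F then w v x - 2 * crossInd w S v x else 0) := by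
    have hrow : ∀ x, dInd w (flipCut S v) F v x - dInd w S F v x
        = if x ∉ F then w v x - 2 * crossInd w S v x else 0 := by
      intro x
      unfold dInd
      by_cases hxF : x ∈ F
      · simp [hxF]
      · simp only [hv, hxF, not_false_iff, and_self, if_true, if_pos]
        rw [crossInd_flip w hdiag]
        ring
    have hsplit : ∑ u, ∑ x, (dInd w (flipCut S v) F u x - dInd w S F u x)
        = (∑ x, (dInd w (flipCut S v) F v x - dInd w S F v x))
          + ∑ u ∈ Finset.univ.erase v, ∑ x, (dInd w (flipCut S v) F u x - dInd w S F u x) :=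
      (Finset.add_sum_erase _
        (fun u => ∑ x, (dInd w (flipCut S v) F u x - dInd w S F u x)) (Finset.mem_univ v)).symm
    rw [hsplit]
    have hcol : ∀ u ∈ Finset.univ.erase v,
        ∑ x, (dInd w (flipCut S v) F u x - dInd w S F u x)
          = dInd w (flipCut S v) F u v - dInd w S F u v := by
      intro u hu
      rw [Finset.mem_erase] at hu
      rw [← Finset.add_sum_erase _ _ (Finset.mem_univ v)]
      have : ∑ x ∈ Finset.univ.erase v, (dInd w (flipCut S v) F u x - dInd w S F u x) = 0 := by
        apply Finset.sum_eq_zero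
        intro x hx
        rw [Finset.mem_erase] at hx
        unfold dInd
        rw [crossInd_flip_other w hu.1 hx.1]
        ring
      rw [this]; ring
    rw [Finset.sum_congr rfl hcol]
    have hcol2 : ∀ u ∈ Finset.univ.erase v,
        dInd w (flipCut S v) F u v - dInd w S F u v
          = if u ∉ F then w v u - 2 * crossInd w S v u else 0 := by
      intro u hu
      rw [dInd_symm w hsym, dInd_symm w hsym S]
      exact hrow u
    rw [Finset.sum_congr rfl hcol2]
    rw [Finset.sum_congr rfl (fun x _ => hrow x)]
    have hvv : (if v ∉ F then w v v - 2 * crossInd w S v v else 0) = 0 := by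
      rw [crossInd_self, hdiag]; simp
    have hx2 : ∑ x, (if x ∉ F then w v x - 2 * crossInd w S v x else 0)
        = (if v ∉ F then w v v - 2 * crossInd w S v v else 0)
          + ∑ x ∈ Finset.univ.erase v, (if x ∉ F then w v x - 2 * crossInd w S v x else 0) :=
      (Finset.add_sum_erase _
        (fun x => if x ∉ F then w v x - 2 * crossInd w S v x else 0) (Finset.mem_univ v)).symm
    rw [hx2, hvv]; ring
  have e1 := sum_dInd w hsym (flipCut S v) F
  have e2 := sum_dInd w hsym S F
  have : ∑ u, ∑ x, (dInd w (flipCut S v) F u x - dInd w S F u x)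
      = 2 * cutMinusW w (flipCut S v) F - 2 * cutMinusW w S F := by
    simp only [Finset.sum_sub_distrib]
    rw [e1, e2]
  rw [this] at hD
  linarith

lemma cutMinus_flip_mem (w : V → V → ℝ) (hsym : ∀ u v, w u v = w v u)
    (S F : Finset V) (v : V) (hv : v ∈ F) :
    cutMinusW w (flipCut S v) F = cutMinusW w S F := by
  have : ∀ u x, dInd w (flipCut S v) F u x = dInd w S F u x := by
    intro u x
    by_cases hu : u = v
    · subst hu; unfold dInd; simp [hv]
    · by_cases hx : x = v
      · subst hx; unfold dInd; simp [hv]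
      · unfold dInd; rw [crossInd_flip_other w hu hx]
  have e1 := sum_dInd w hsym (flipCut S v) F
  have e2 := sum_dInd w hsym S F
  have h := Finset.sum_congr rfl (fun u (_ : u ∈ Finset.univ) =>
    Finset.sum_congr rfl (fun x (_ : x ∈ Finset.univ) => this u x))
  rw [e1, e2] at h
  linarith

lemma crossDegW_eq (w : V → V → ℝ) (S : Finset V) (v : V) :
    crossDegW w S v = ∑ u, crossInd w S v u := rfl

lemma cutW_eq_cutMinus_empty (w : V → V → ℝ) (S : Finset V) :
    cutW w S = cutMinusW w S ∅ := by
  unfold cutW cutMinusW; simp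

theorem stmt_3 (w : V → V → ℝ) (hsym : ∀ u v, w u v = w v u)
    (h01 : ∀ u v, w u v = 0 ∨ w u v = 1) (hdiag : ∀ v, w v v = 0)
    (k : ℕ) (hk : 0 < k) (hkcard : k ≤ Fintype.card V) :
    ∃ S : Finset V, (∀ v, (degW w v - k) / 2 < crossDegW w S v) ∧
      ∀ S' : Finset V, ftValW w S' k ≤ ftValW w S k := by
  classical
  have hw0 : ∀ u x, 0 ≤ w u x := fun u x => by rcases h01 u x with h | h <;> simp [h]
  have hw1 : ∀ u x, w u x ≤ 1 := fun u x => by rcases h01 u x with h | h <;> simp [h]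
  -- existence of a fault set of size k
  obtain ⟨F₀, -, hF₀⟩ := Finset.exists_subset_card_eq (s := (Finset.univ : Finset V))
    (n := k) (by simpa using hkcard)
  have hSetNe : ∀ S : Finset V,
      ((fun F => cutMinusW w S F) '' {F : Finset V | F.card = k}).Nonempty :=
    fun S => ⟨_, ⟨F₀, hF₀, rfl⟩⟩
  have hBdd : ∀ S : Finset V,
      BddBelow ((fun F => cutMinusW w S F) '' {F : Finset V | F.card = k}) :=
    fun S => (Set.toFinite _).bddBelow
  -- monotonicity of ftValW under pointwise domination
  have hftMono : ∀ S S' : Finset V,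
      (∀ F : Finset V, F.card = k → cutMinusW w S F ≤ cutMinusW w S' F) →
      ftValW w S k ≤ ftValW w S' k := by
    intro S S' h
    refine le_csInf (hSetNe S') ?_
    rintro b ⟨F, hF, rfl⟩
    exact (csInf_le (hBdd S) ⟨F, hF, rfl⟩).trans (h F hF)
  -- choose maximizer of ftValW, then of cutW among those
  obtain ⟨S₀, -, hS₀⟩ := Finset.exists_max_image (Finset.univ : Finset (Finset V))
    (fun S => ftValW w S k) ⟨∅, Finset.mem_univ ∅⟩
  set A : Finset (Finset V) :=
    Finset.univ.filter (fun S => ∀ S', ftValW w S' k ≤ ftValW w S k) with hA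
  have hS₀A : S₀ ∈ A := by
    rw [hA, Finset.mem_filter]
    exact ⟨Finset.mem_univ _, fun S' => hS₀ S' (Finset.mem_univ _)⟩
  obtain ⟨S, hSA, hSmax⟩ := Finset.exists_max_image A (fun S => cutW w S) ⟨S₀, hS₀A⟩
  rw [hA, Finset.mem_filter] at hSA
  refine ⟨S, ?_, hSA.2⟩
  by_contra hbad
  push_neg at hbad
  obtain ⟨v, hv⟩ := hbad
  -- v violates stability: crossDegW w S v ≤ (degW w v - k)/2
  set S' := flipCut S v with hS'
  -- ftValW doesn't decrease
  have hft : ftValW w S k ≤ ftValW w S' k := by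
    apply hftMono
    intro F hF
    by_cases hvF : v ∈ F
    · rw [cutMinus_flip_mem w hsym S F v hvF]
    · rw [cutMinus_flip w hsym hdiag S F v hvF]
      have hnn : 0 ≤ ∑ x, (if x ∉ F then w v x - 2 * crossInd w S v x else 0) := by
        have hwsplit : ∑ x, (if x ∉ F then w v x else 0)
            = degW w v - ∑ x, (if x ∈ F then w v x else 0) := by
          unfold degW
          rw [eq_sub_iff_add_eq, ← Finset.sum_add_distrib]
          refine Finset.sum_congr rfl fun x _ => ?_
          by_cases hx : x ∈ F <;> simp [hx]
        have hFle : ∑ x, (if x ∈ F then w v x else 0) ≤ (k : ℝ) := by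
          calc ∑ x, (if x ∈ F then w v x else 0) ≤ ∑ x, (if x ∈ F then (1:ℝ) else 0) := by
                apply Finset.sum_le_sum
                intro x _
                by_cases hx : x ∈ F <;> simp [hx, hw1]
            _ = F.card := by simp [Finset.sum_ite_mem]
            _ = (k : ℝ) := by rw [hF]
        have hcle : ∑ x, (if x ∉ F then crossInd w S v x else 0) ≤ crossDegW w S v := by
          rw [crossDegW_eq]
          apply Finset.sum_le_sum
          intro x _
          by_cases hx : x ∈ F
          · simp only [hx, not_true, if_false]
            unfold crossInd
            split
            · exact hw0 v x
            · exact le_refl _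
          · simp [hx]
        have hsum : ∑ x, (if x ∉ F then w v x - 2 * crossInd w S v x else 0)
            = (∑ x, (if x ∉ F then w v x else 0))
              - 2 * ∑ x, (if x ∉ F then crossInd w S v x else 0) := by
          rw [Finset.mul_sum, ← Finset.sum_sub_distrib]
          refine Finset.sum_congr rfl fun x _ => ?_
          by_cases hx : x ∈ F <;> simp [hx]
        rw [hsum, hwsplit]
        linarith
      linarith
  -- but cutW strictly increases
  have hcut : cutW w S + (k:ℝ) ≤ cutW w S' := by
    have := cutMinus_flip w hsym hdiag S ∅ v (Finset.notMem_empty v)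
    rw [← cutW_eq_cutMinus_empty, ← cutW_eq_cutMinus_empty] at this
    have hsimp : ∑ x, (if x ∉ (∅ : Finset V) then w v x - 2 * crossInd w S v x else 0)
        = degW w v - 2 * crossDegW w S v := by
      simp only [Finset.notMem_empty, not_false_iff, if_true]
      rw [Finset.sum_sub_distrib, ← Finset.mul_sum, ← crossDegW_eq]
      rfl
    rw [hsimp] at this
    rw [this]
    linarith
  have hS'A : S' ∈ A := by
    rw [hA, Finset.mem_filter]
    refine ⟨Finset.mem_univ _, fun T => le_trans (hSA.2 T) hft⟩
  have := hSmax S' hS'A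
  have hkpos : (0:ℝ) < k := by exact_mod_cast hk
  linarith
end
end

section
/- Let S be a stable cut in a graph G (d_S(v) ≥ (d(v)−1)/2 strictly, i.e., d_S(v) > (d(v)−1)/2 for all v) with φ(S) < (m−Δ)/2. Then S has a unique critical vertex, i.e., there is exactly one vertex u with C_{S−u,G−u} = φ(S), and this vertex satisfies d_S(u) > Σ_{v≠u} x_S(v) + Δ − d(u)/2. -/
open Finset

noncomputable section

variable {V : Type*} [Fintype V] [DecidableEq V]

set_option linter.unusedSectionVars false in
lemma crossDegW_double (w : V → V → ℝ) (hsym : ∀ u v, w u v = w v u) (S : Finset V) (x : V) :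
    crossDegW w S x = ∑ u ∈ S, ∑ v ∈ Sᶜ, (if u = x ∨ v = x then w u v else 0) := by
  by_cases hx : x ∈ S
  · have h1 : crossDegW w S x = ∑ u ∈ Sᶜ, w x u := by
      unfold crossDegW
      rw [← Finset.sum_filter]
      congr 1
      ext u
      simp [hx, Finset.mem_compl]
    rw [h1]
    have h2 : ∀ u ∈ S, ∀ v ∈ Sᶜ, (if u = x ∨ v = x then w u v else 0) = (if u = x then w u v else 0) := by
      intro u hu v hv
      have : v ≠ x := fun h => (Finset.mem_compl.mp hv) (h ▸ hx)
      simp [this]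
    rw [Finset.sum_congr rfl (fun u hu => Finset.sum_congr rfl (fun v hv => h2 u hu v hv))]
    rw [Finset.sum_comm]
    simp [Finset.sum_ite_eq' S x, hx]
  · have h1 : crossDegW w S x = ∑ u ∈ S, w x u := by
      unfold crossDegW
      rw [← Finset.sum_filter]
      congr 1
      ext u
      simp [hx]
    rw [h1]
    have h2 : ∀ u ∈ S, ∀ v ∈ Sᶜ, (if u = x ∨ v = x then w u v else 0) = (if v = x then w u v else 0) := by
      intro u hu v hv
      have : u ≠ x := fun h => hx (h ▸ hu)
      simp [this]
    rw [Finset.sum_congr rfl (fun u hu => Finset.sum_congr rfl (fun v hv => h2 u hu v hv))]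
    have : ∀ u ∈ S, (∑ v ∈ Sᶜ, if v = x then w u v else 0) = w u x := by
      intro u hu
      rw [Finset.sum_ite_eq' Sᶜ x]
      simp [Finset.mem_compl, hx]
    rw [Finset.sum_congr rfl this]
    exact Finset.sum_congr rfl (fun u _ => hsym x u)

lemma cutMinus_single (w : V → V → ℝ) (hsym : ∀ u v, w u v = w v u) (S : Finset V) (x : V) :
    cutMinusW w S {x} = cutW w S - crossDegW w S x := by
  rw [crossDegW_double w hsym S x]
  unfold cutMinusW cutW
  rw [eq_sub_iff_add_eq, ← Finset.sum_add_distrib]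
  apply Finset.sum_congr rfl
  intro u _
  rw [← Finset.sum_add_distrib]
  apply Finset.sum_congr rfl
  intro v _
  by_cases h1 : u = x <;> by_cases h2 : v = x <;> simp [h1, h2]

lemma sum_crossDegW (w : V → V → ℝ) (hsym : ∀ u v, w u v = w v u) (S : Finset V) :
    ∑ v, crossDegW w S v = 2 * cutW w S := by
  unfold crossDegW
  have split : ∀ v u : V, (if (v ∈ S ∧ u ∉ S) ∨ (u ∈ S ∧ v ∉ S) then w v u else 0)
      = (if v ∈ S ∧ u ∉ S then w v u else 0) + (if u ∈ S ∧ v ∉ S then w v u else 0) := by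
    intro v u
    by_cases h1 : v ∈ S <;> by_cases h2 : u ∈ S <;> simp [h1, h2]
  simp_rw [split, Finset.sum_add_distrib]
  have e1 : ∑ v, ∑ u, (if v ∈ S ∧ u ∉ S then w v u else 0) = cutW w S := by
    unfold cutW
    have h : ∀ v : V, ∑ u, (if v ∈ S ∧ u ∉ S then w v u else 0)
        = (if v ∈ S then ∑ u ∈ Sᶜ, w v u else 0) := by
      intro v
      by_cases hv : v ∈ S
      · simp only [hv, true_and, if_true, ← Finset.mem_compl]
        rw [Finset.sum_ite_mem, Finset.univ_inter]
      · simp [hv]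
    simp_rw [h, Finset.sum_ite_mem, Finset.univ_inter]
  have e2 : ∑ v, ∑ u, (if u ∈ S ∧ v ∉ S then w v u else 0) = cutW w S := by
    unfold cutW
    rw [Finset.sum_comm]
    have h : ∀ u : V, ∑ v, (if u ∈ S ∧ v ∉ S then w v u else 0)
        = (if u ∈ S then ∑ v ∈ Sᶜ, w u v else 0) := by
      intro u
      by_cases hu : u ∈ S
      · simp only [hu, true_and, if_true, ← Finset.mem_compl]
        rw [Finset.sum_ite_mem, Finset.univ_inter]
        exact Finset.sum_congr rfl fun v _ => hsym v u
      · simp [hu]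
    simp_rw [h, Finset.sum_ite_mem, Finset.univ_inter]
  rw [e1, e2]; ring


lemma half_deg_le (w : V → V → ℝ) (h01 : ∀ u v, w u v = 0 ∨ w u v = 1) (S : Finset V) (v : V)
    (hst : (degW w v - 1) / 2 < crossDegW w S v) :
    degW w v / 2 ≤ crossDegW w S v := by
  set f : V → ℤ := fun u => if w v u = 0 then 0 else 1 with hf
  have hcast : ∀ u, (f u : ℝ) = w v u := by
    intro u; rcases h01 v u with h | h <;> simp [f, h]
  have hD : degW w v = ((∑ u, f u : ℤ) : ℝ) := by
    unfold degW; push_cast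
    exact (Finset.sum_congr rfl fun u _ => (hcast u).symm)
  have hDs : crossDegW w S v
      = ((∑ u, if (v ∈ S ∧ u ∉ S) ∨ (u ∈ S ∧ v ∉ S) then f u else 0 : ℤ) : ℝ) := by
    unfold crossDegW; push_cast
    refine Finset.sum_congr rfl fun u _ => ?_
    by_cases h : (v ∈ S ∧ u ∉ S) ∨ (u ∈ S ∧ v ∉ S) <;> simp [h, hcast u]
  rw [hD, hDs] at hst ⊢
  set D := ∑ u, f u with hDd
  set Ds := ∑ u, if (v ∈ S ∧ u ∉ S) ∨ (u ∈ S ∧ v ∉ S) then f u else 0 with hDsd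
  have h1 : (D : ℝ) < 2 * (Ds : ℝ) + 1 := by linarith
  have h2 : D < 2 * Ds + 1 := by exact_mod_cast h1
  have h3 : D ≤ 2 * Ds := by omega
  have h4 : (D : ℝ) ≤ 2 * (Ds : ℝ) := by exact_mod_cast h3
  linarith

lemma degW_le_max (w : V → V → ℝ) (v : V) : degW w v ≤ maxDegW w :=
  le_csSup (Set.finite_range _).bddAbove ⟨v, rfl⟩

set_option linter.unusedVariables false in
theorem stmt_6 [Nonempty V] (w : V → V → ℝ) (hsym : ∀ u v, w u v = w v u)
    (h01 : ∀ u v, w u v = 0 ∨ w u v = 1) (hdiag : ∀ v, w v v = 0)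
    (S : Finset V)
    (hstable : ∀ v, (degW w v - 1) / 2 < crossDegW w S v)
    (hft : ft1W w S < (totalW w - maxDegW w) / 2) :
    (∃! u : V, cutMinusW w S {u} = ft1W w S) ∧
      ∀ u : V, cutMinusW w S {u} = ft1W w S →
        (∑ v ∈ Finset.univ.erase u, (crossDegW w S v - degW w v / 2)) +
            maxDegW w - degW w u / 2 < crossDegW w S u := by
  have hsum : ∑ v, (crossDegW w S v - degW w v / 2) = 2 * cutW w S - totalW w := by
    rw [Finset.sum_sub_distrib, sum_crossDegW w hsym S]
    unfold totalW degW
    rw [← Finset.sum_div]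
  -- existence of a critical vertex
  obtain ⟨u0, hu0⟩ : ∃ u, cutMinusW w S {u} = ft1W w S := by
    have hmem : ft1W w S ∈ Set.range fun v => cutMinusW w S {v} :=
      (Set.range_nonempty _).csInf_mem (Set.finite_range _)
    obtain ⟨u, hu⟩ := hmem
    exact ⟨u, hu⟩
  -- key inequality for any critical vertex
  have hkey : ∀ u, cutMinusW w S {u} = ft1W w S →
      cutW w S - crossDegW w S u < (totalW w - maxDegW w) / 2 := by
    intro u hu
    rw [← cutMinus_single w hsym S u, hu]
    exact hft
  have hx_nonneg : ∀ v, 0 ≤ crossDegW w S v - degW w v / 2 := fun v => by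
    have := half_deg_le w h01 S v (hstable v); linarith
  have hx_big : ∀ u, cutMinusW w S {u} = ft1W w S →
      cutW w S - totalW w / 2 < crossDegW w S u - degW w u / 2 := by
    intro u hu
    have h1 := hkey u hu
    have h2 := degW_le_max w u
    linarith
  constructor
  · refine ⟨u0, hu0, ?_⟩
    intro u hu
    by_contra hne
    have hp1 := Finset.sum_pair (f := fun v => crossDegW w S v - degW w v / 2) hne
    have hp2 : ∑ v ∈ ({u, u0} : Finset V), (crossDegW w S v - degW w v / 2)
        ≤ ∑ v, (crossDegW w S v - degW w v / 2) :=
      Finset.sum_le_sum_of_subset_of_nonneg (Finset.subset_univ _)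
        (fun v _ _ => hx_nonneg v)
    have hpair : (crossDegW w S u - degW w u / 2) + (crossDegW w S u0 - degW w u0 / 2)
        ≤ ∑ v, (crossDegW w S v - degW w v / 2) := by
      rw [← hp1]; exact hp2
    have b1 := hx_big u hu
    have b2 := hx_big u0 hu0
    rw [hsum] at hpair
    linarith
  · intro u hu
    have herase : (crossDegW w S u - degW w u / 2)
        + ∑ v ∈ Finset.univ.erase u, (crossDegW w S v - degW w v / 2)
        = ∑ v, (crossDegW w S v - degW w v / 2) :=
      Finset.add_sum_erase _ (fun v => crossDegW w S v - degW w v / 2) (Finset.mem_univ u)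
    have h1 := hkey u hu
    rw [hsum] at herase
    linarith
end
end

section
/- Let S be a stable cut in a graph G with φ(S) < (m−Δ)/2, and let u be its (unique) critical vertex, with u∈S. Then u has a neighbor w outside S with x_S(w)=0, i.e., d_S(w)=d(w)/2. -/
open Finset

noncomputable section

variable {V : Type*} [Fintype V] [DecidableEq V]

/-- A sum of terms each equal to `0` or `1` is a natural number. -/
lemma existsNatSum (s : Finset V) (f : V → ℝ) (h : ∀ i, f i = 0 ∨ f i = 1) :
    ∃ n : ℕ, ∑ i ∈ s, f i = n := by
  classical
  induction s using Finset.cons_induction with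
  | empty => exact ⟨0, by simp⟩
  | cons a s ha ih =>
    obtain ⟨n, hn⟩ := ih
    rcases h a with h' | h'
    · exact ⟨n, by simp [h', hn]⟩
    · exact ⟨n + 1, by rw [Finset.sum_cons, h', hn]; push_cast; ring⟩

theorem stmt_7 [Nonempty V] (w : V → V → ℝ) (hsym : ∀ u v, w u v = w v u)
    (h01 : ∀ u v, w u v = 0 ∨ w u v = 1) (hdiag : ∀ v, w v v = 0)
    (S : Finset V)
    (hstable : ∀ v, (degW w v - 1) / 2 < crossDegW w S v)
    (hft : ft1W w S < (totalW w - maxDegW w) / 2)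
    (u : V) (hu : u ∈ S) (hcrit : cutMinusW w S {u} = ft1W w S) :
    ∃ x : V, w u x = 1 ∧ x ∉ S ∧ crossDegW w S x = degW w x / 2 := by
  by_contra hcon
  push_neg at hcon
  have hw0 : ∀ a b, (0:ℝ) ≤ w a b := by
    intro a b; rcases h01 a b with h | h <;> rw [h] <;> norm_num
  -- integrality of degrees and crossing degrees
  have hnatdeg : ∀ v, ∃ n : ℕ, degW w v = n := fun v => existsNatSum _ _ (h01 v)
  have hnatcross : ∀ v, ∃ n : ℕ, crossDegW w S v = n := by
    intro v
    refine existsNatSum _ _ ?_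
    intro i
    by_cases hc : (v ∈ S ∧ i ∉ S) ∨ (i ∈ S ∧ v ∉ S)
    · simp only [if_pos hc]; exact h01 v i
    · simp [hc]
  obtain ⟨x, hxdef⟩ : ∃ x : V → ℝ, ∀ v, x v = crossDegW w S v - degW w v / 2 :=
    ⟨_, fun _ => rfl⟩
  have hx0 : ∀ v, 0 ≤ x v := by
    intro v
    obtain ⟨a, ha⟩ := hnatcross v
    obtain ⟨b, hb⟩ := hnatdeg v
    have hs := hstable v
    rw [ha, hb] at hs
    have h1 : (b:ℝ) < 2 * a + 1 := by linarith
    have h2 : b < 2 * a + 1 := by exact_mod_cast h1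
    have h3 : (b:ℝ) ≤ 2 * a := by exact_mod_cast (by omega : b ≤ 2 * a)
    rw [hxdef, ha, hb]
    linarith
  have hxhalf : ∀ v, v ∉ S → w u v = 1 → (1:ℝ)/2 ≤ x v := by
    intro v hv hwv
    have hne := hcon v hwv hv
    obtain ⟨a, ha⟩ := hnatcross v
    obtain ⟨b, hb⟩ := hnatdeg v
    have hs := hstable v
    rw [ha, hb] at hs hne
    have h1 : (b:ℝ) < 2 * a + 1 := by linarith
    have h2 : b < 2 * a + 1 := by exact_mod_cast h1
    have hne' : 2 * a ≠ b := by
      intro h; apply hne; rw [← h]; push_cast; ring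
    have h3 : (b:ℝ) + 1 ≤ 2 * a := by exact_mod_cast (by omega : b + 1 ≤ 2 * a)
    rw [hxdef, ha, hb]
    linarith
  -- crossing degree of a vertex inside `S`
  have hSc : (Sᶜ : Finset V) = Finset.univ.filter (fun v => v ∉ S) := by
    ext v; simp
  have hSS : (S : Finset V) = Finset.univ.filter (fun v => v ∈ S) := by
    ext v; simp
  have hcross_in : ∀ a ∈ S, crossDegW w S a = ∑ b ∈ Sᶜ, w a b := by
    intro a haS
    have e : ∀ b, (if (a ∈ S ∧ b ∉ S) ∨ (b ∈ S ∧ a ∉ S) then w a b else 0)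
        = (if b ∈ Sᶜ then w a b else 0) := by
      intro b; by_cases hb : b ∈ S <;> simp [hb, haS]
    rw [crossDegW, Finset.sum_congr rfl (fun b _ => e b), Finset.sum_ite_mem,
      Finset.univ_inter]
  have hcross_out : ∀ a ∈ Sᶜ, crossDegW w S a = ∑ b ∈ S, w a b := by
    intro a haS
    rw [Finset.mem_compl] at haS
    have e : ∀ b, (if (a ∈ S ∧ b ∉ S) ∨ (b ∈ S ∧ a ∉ S) then w a b else 0)
        = (if b ∈ S then w a b else 0) := by
      intro b; by_cases hb : b ∈ S <;> simp [hb, haS]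
    rw [crossDegW, Finset.sum_congr rfl (fun b _ => e b), Finset.sum_ite_mem,
      Finset.univ_inter]
  -- (1) removing u removes exactly its crossing edges
  have h1 : cutMinusW w S {u} = cutW w S - crossDegW w S u := by
    have key : ∀ a ∈ S,
        (∑ b ∈ Sᶜ, if a ∉ ({u} : Finset V) ∧ b ∉ ({u} : Finset V) then w a b else 0)
          = (∑ b ∈ Sᶜ, w a b) - (if a = u then ∑ b ∈ Sᶜ, w a b else 0) := by
      intro a haS
      by_cases hau : a = u
      · subst hau
        rw [if_pos rfl, sub_self]
        apply Finset.sum_eq_zero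
        intro b _
        simp
      · rw [if_neg hau, sub_zero]
        apply Finset.sum_congr rfl
        intro b hb
        rw [Finset.mem_compl] at hb
        have hbu : b ≠ u := fun h => hb (h ▸ hu)
        simp [hau, hbu]
    rw [cutMinusW, Finset.sum_congr rfl key, Finset.sum_sub_distrib,
      Finset.sum_ite_eq' S u (fun a => ∑ b ∈ Sᶜ, w a b), if_pos hu,
      cutW, hcross_in u hu]
  -- (2) sum of crossing degrees is twice the cut
  have hdouble : ∑ v, crossDegW w S v = 2 * cutW w S := by
    rw [← Finset.sum_add_sum_compl S (crossDegW w S)]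
    have e1 : ∑ v ∈ S, crossDegW w S v = cutW w S :=
      Finset.sum_congr rfl hcross_in
    have e2 : ∑ v ∈ Sᶜ, crossDegW w S v = cutW w S := by
      rw [Finset.sum_congr rfl hcross_out, Finset.sum_comm, cutW]
      exact Finset.sum_congr rfl fun a _ => Finset.sum_congr rfl fun b _ => (hsym b a)
    rw [e1, e2]; ring
  -- (3) sum of degrees is twice total weight
  have hdeg2 : ∑ v, degW w v = 2 * totalW w := by
    simp only [degW, totalW]; ring
  -- (4) crossing degree at most degree
  have hcd : crossDegW w S u ≤ degW w u := by
    apply Finset.sum_le_sum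
    intro i _
    by_cases hc : (u ∈ S ∧ i ∉ S) ∨ (i ∈ S ∧ u ∉ S)
    · rw [if_pos hc]
    · rw [if_neg hc]; exact hw0 u i
  -- (5) degree bounded by max degree
  have hmax : degW w u ≤ maxDegW w :=
    le_csSup (Set.finite_range _).bddAbove ⟨u, rfl⟩
  -- (6) the key strict inequality from hft
  have h6 : cutW w S - crossDegW w S u < (totalW w - degW w u) / 2 := by
    rw [← hcrit, h1] at hft
    linarith
  -- (7) total excess
  have hsum_x : ∑ v, x v = 2 * cutW w S - totalW w := by
    rw [Finset.sum_congr rfl (fun v _ => hxdef v), Finset.sum_sub_distrib, hdouble,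
      ← Finset.sum_div, hdeg2]
    ring
  -- (8) crossing degree of u bounded by excess outside S
  have h8 : crossDegW w S u ≤ 2 * ∑ v ∈ Sᶜ, x v := by
    rw [hcross_in u hu, Finset.mul_sum]
    apply Finset.sum_le_sum
    intro b hb
    rcases h01 u b with h | h
    · rw [h]; have := hx0 b; linarith
    · rw [h]
      have := hxhalf b (Finset.mem_compl.mp hb) h
      linarith
  -- (9) excess outside S plus x u at most total excess
  have h9 : (∑ v ∈ Sᶜ, x v) + x u ≤ ∑ v, x v := by
    have hsplit := Finset.sum_add_sum_compl S x
    have hxu : x u ≤ ∑ v ∈ S, x v :=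
      Finset.single_le_sum (fun i _ => hx0 i) hu
    linarith
  have hxu : x u = crossDegW w S u - degW w u / 2 := hxdef u
  rw [hsum_x] at h9
  linarith
end
end

section
/- Every stable cut S in an unweighted graph G with maximum degree Δ ≤ 2 satisfies φ(S) ≥ (1/2)·φ(S*) where S* is an optimal single-fault adaptive fault tolerant cut. -/
open Finset

noncomputable section

variable {V : Type*} [Fintype V] [DecidableEq V]

set_option linter.unusedSectionVars false
set_option maxHeartbeats 800000

section Aux
lemma key_count {V : Type*} [Fintype V] [DecidableEq V] [Nonempty V]
    (d a b : V → ℕ) (cS cT : ℕ)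
    (hsa : ∑ v, a v = 2 * cS) (hsb : ∑ v, b v = 2 * cT)
    (had : ∀ v, a v ≤ d v) (hbd : ∀ v, b v ≤ d v) (hd2 : ∀ v, d v ≤ 2)
    (hst : ∀ v, d v ≤ 2 * a v)
    (hApos : (∃ v, a v = 2) → 3 ≤ (univ.filter fun v => 1 ≤ d v).card)
    (hpar : (∀ v, b v = d v) → (∀ v, d v ≠ 1) → Even cT) :
    ∃ u₀ : V, cT + 2 * (univ.sup a) ≤ 2 * cS + b u₀ := by
  classical
  have ha2 : ∀ v, a v ≤ 2 := fun v => (had v).trans (hd2 v)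
  -- ∑ a = #{1≤a} + #{a=2}
  have htri : ∑ v, a v =
      (univ.filter fun v => 1 ≤ a v).card + (univ.filter fun v => a v = 2).card := by
    rw [Finset.card_filter, Finset.card_filter, ← Finset.sum_add_distrib]
    apply Finset.sum_congr rfl
    intro v _
    have := ha2 v
    interval_cases (a v) <;> simp
  have hfeq : (univ.filter fun v => 1 ≤ a v) = (univ.filter fun v => 1 ≤ d v) := by
    apply Finset.filter_congr
    intro v _
    simp only [iff_def]
    constructor
    · intro h; exact h.trans (had v)
    · intro h; have := hst v; omega
  have h2cS : 2 * cS =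
      (univ.filter fun v => 1 ≤ d v).card + (univ.filter fun v => a v = 2).card := by
    rw [← hsa, htri, hfeq]
  have hdite : ∑ v, (if 1 ≤ d v then 2 else 0) = 2 * (univ.filter fun v => 1 ≤ d v).card := by
    rw [Finset.card_filter, Finset.mul_sum]
    apply Finset.sum_congr rfl; intro v _
    by_cases h : 1 ≤ d v <;> simp [h]
  have hsd : ∑ v, d v ≤ 2 * (univ.filter fun v => 1 ≤ d v).card := by
    rw [← hdite]
    apply Finset.sum_le_sum; intro v _
    by_cases h : 1 ≤ d v
    · simpa [h] using hd2 v
    · simp [h]; omega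
  have hba : ∑ v, b v ≤ ∑ v, d v := Finset.sum_le_sum (fun v _ => hbd v)
  have hcTn' : cT ≤ (univ.filter fun v => 1 ≤ d v).card := by omega
  have hDle : univ.sup a ≤ 2 := Finset.sup_le (fun v _ => ha2 v)
  obtain ⟨vD, -, hvD⟩ := Finset.exists_mem_eq_sup univ univ_nonempty a
  have haD : a vD ≤ ∑ v, a v := Finset.single_le_sum (fun v _ => Nat.zero_le _) (mem_univ vD)
  -- helper: cT = n' forces pointwise equalities
  have hforce : cT = (univ.filter fun v => 1 ≤ d v).card →
      (∀ v, b v = d v) ∧ (∀ v, d v ≠ 1) := by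
    intro hcT
    have hbsum : ∑ v, b v = ∑ v, d v := by omega
    have hdsum : ∑ v, d v = ∑ v, (if 1 ≤ d v then 2 else 0) := by omega
    have hbe : ∀ v, b v = d v := fun v =>
      (Finset.sum_eq_sum_iff_of_le (fun v _ => hbd v)).mp hbsum v (mem_univ v)
    have hdle' : ∀ v ∈ univ, d v ≤ (if 1 ≤ d v then 2 else 0) := by
      intro v _
      by_cases h : 1 ≤ d v
      · simpa [h] using hd2 v
      · simp [h]; omega
    have hde : ∀ v, d v = (if 1 ≤ d v then 2 else 0) := fun v =>
      (Finset.sum_eq_sum_iff_of_le hdle').mp hdsum v (mem_univ v)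
    refine ⟨hbe, fun v => ?_⟩
    have := hde v
    by_cases h : 1 ≤ d v <;> simp [h] at this <;> omega
  -- helper: cT ≥ 1 gives a vertex with b ≥ 1
  have hbex : 1 ≤ cT → ∃ u, 1 ≤ b u := by
    intro h
    by_contra hc
    push_neg at hc
    have : ∑ v, b v = 0 := Finset.sum_eq_zero (fun v _ => by have := hc v; omega)
    omega
  by_cases hD2 : univ.sup a = 2
  · -- D = 2 case
    have hp1 : 1 ≤ (univ.filter fun v => a v = 2).card := by
      apply Finset.card_pos.mpr
      exact ⟨vD, mem_filter.mpr ⟨mem_univ vD, by omega⟩⟩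
    have hn3 : 3 ≤ (univ.filter fun v => 1 ≤ d v).card := hApos ⟨vD, by omega⟩
    by_cases hb2 : ∃ u, b u = 2
    · obtain ⟨u, hu⟩ := hb2
      refine ⟨u, ?_⟩
      rw [hD2, hu]
      -- need cT + 4 ≤ 2cS + 2 i.e. cT + 2 ≤ n' + p
      by_cases hp2 : 2 ≤ (univ.filter fun v => a v = 2).card
      · omega
      · -- p = 1 : must rule out cT = n'
        by_cases hcT : cT = (univ.filter fun v => 1 ≤ d v).card
        · obtain ⟨hbe, hd1⟩ := hforce hcT
          obtain ⟨k, hk⟩ := hpar hbe hd1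
          omega
        · omega
    · -- all b ≤ 1
      push_neg at hb2
      have hb1 : ∀ v, b v ≤ 1 := fun v => by
        have h1 := (hbd v).trans (hd2 v); have := hb2 v; omega
      have h2cT : 2 * cT ≤ (univ.filter fun v => 1 ≤ d v).card := by
        have h1 : ∑ v, b v ≤ ∑ v, (if 1 ≤ d v then 1 else 0) := by
          apply Finset.sum_le_sum; intro v _
          by_cases h : 1 ≤ d v
          · simp [h]; exact hb1 v
          · simp [h]; have := hbd v; omega
        rw [Finset.card_filter]
        omega
      by_cases hcT0 : cT = 0
      · exact ⟨vD, by omega⟩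
      · obtain ⟨u, hu⟩ := hbex (by omega)
        exact ⟨u, by omega⟩
  · -- D ≤ 1 case
    have hD1 : univ.sup a ≤ 1 := by omega
    have hp0 : (univ.filter fun v => a v = 2).card = 0 := by
      apply Finset.card_eq_zero.mpr
      apply Finset.filter_eq_empty_iff.mpr
      intro v _
      have : a v ≤ univ.sup a := Finset.le_sup (mem_univ v)
      omega
    by_cases hcT0 : cT = 0
    · refine ⟨vD, ?_⟩
      by_cases hD0 : univ.sup a = 0
      · simp [hcT0, hD0]
      · -- D = 1, so a vD = 1, so 1 ≤ ∑ a = 2cS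
        omega
    · obtain ⟨u, hu⟩ := hbex (by omega)
      by_cases hcT : cT = (univ.filter fun v => 1 ≤ d v).card
      · obtain ⟨hbe, hd1⟩ := hforce hcT
        -- b u ≥ 1 so d u ≥ 1 so d u = 2 so b u = 2
        have hdu : d u ≠ 1 := hd1 u
        have hbu : b u = d u := hbe u
        have : b u = 2 := by have := (hbd u).trans (hd2 u); omega
        exact ⟨u, by omega⟩
      · exact ⟨u, by omega⟩

namespace Stmt8Aux

def eN (w : V → V → ℝ) (u v : V) : ℕ := if w u v = 1 then 1 else 0
def dN (w : V → V → ℝ) (v : V) : ℕ := ∑ u, eN w v u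
def aN (w : V → V → ℝ) (X : Finset V) (v : V) : ℕ :=
  ∑ u, if (v ∈ X ∧ u ∉ X) ∨ (u ∈ X ∧ v ∉ X) then eN w v u else 0
def cN (w : V → V → ℝ) (X : Finset V) : ℕ := ∑ u ∈ X, ∑ v ∈ Xᶜ, eN w u v

variable {w : V → V → ℝ}

lemma wcast (h01 : ∀ u v, w u v = 0 ∨ w u v = 1) (u v : V) :
    w u v = (eN w u v : ℝ) := by
  rcases h01 u v with h | h <;> simp [eN, h]

lemma eN_symm (hsym : ∀ u v, w u v = w v u) (u v : V) : eN w u v = eN w v u := by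
  simp [eN, hsym u v]

lemma eN_le_one (u v : V) : eN w u v ≤ 1 := by unfold eN; split <;> omega

lemma degW_cast (h01 : ∀ u v, w u v = 0 ∨ w u v = 1) (v : V) :
    degW w v = (dN w v : ℝ) := by
  unfold degW dN
  push_cast
  exact Finset.sum_congr rfl fun u _ => wcast h01 v u

lemma crossDegW_cast (h01 : ∀ u v, w u v = 0 ∨ w u v = 1) (X : Finset V) (v : V) :
    crossDegW w X v = (aN w X v : ℝ) := by
  unfold crossDegW aN
  push_cast
  refine Finset.sum_congr rfl fun u _ => ?_
  split <;> simp [wcast h01]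

lemma cutW_cast (h01 : ∀ u v, w u v = 0 ∨ w u v = 1) (X : Finset V) :
    cutW w X = (cN w X : ℝ) := by
  unfold cutW cN
  push_cast
  exact Finset.sum_congr rfl fun u _ => Finset.sum_congr rfl fun x _ => wcast h01 u x

/-- generic double-ite sum lemma -/
lemma double_ite {M : Type*} [AddCommMonoid M] (f : V → V → M) (X : Finset V) :
    (∑ v, ∑ u, if v ∈ X ∧ u ∉ X then f v u else 0) = ∑ v ∈ X, ∑ u ∈ Xᶜ, f v u := by
  have h1 : ∀ v, (∑ u, if v ∈ X ∧ u ∉ X then f v u else 0)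
      = if v ∈ X then ∑ u ∈ Xᶜ, f v u else 0 := by
    intro v
    by_cases hv : v ∈ X
    · simp only [hv, true_and, if_true]
      rw [← Finset.sum_filter]
      congr 1
      ext u; simp
    · simp [hv]
  simp only [h1]
  rw [← Finset.sum_filter]
  congr 1
  ext v; simp


lemma handshake (hsym : ∀ u v, w u v = w v u) (X : Finset V) :
    ∑ v, aN w X v = 2 * cN w X := by
  unfold aN cN
  have hsplit : ∀ v u : V, (if (v ∈ X ∧ u ∉ X) ∨ (u ∈ X ∧ v ∉ X) then eN w v u else 0)
      = (if v ∈ X ∧ u ∉ X then eN w v u else 0) + (if u ∈ X ∧ v ∉ X then eN w v u else 0) := by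
    intro v u
    by_cases h1 : v ∈ X <;> by_cases h2 : u ∈ X <;> simp [h1, h2]
  simp only [hsplit, Finset.sum_add_distrib]
  have e1 : (∑ v, ∑ u, if v ∈ X ∧ u ∉ X then eN w v u else 0)
      = ∑ u ∈ X, ∑ x ∈ Xᶜ, eN w u x := double_ite _ X
  have e2 : (∑ v : V, ∑ u : V, if u ∈ X ∧ v ∉ X then eN w v u else 0)
      = ∑ u ∈ X, ∑ x ∈ Xᶜ, eN w u x := by
    rw [Finset.sum_comm]
    rw [double_ite (fun u v => eN w v u) X]
    exact Finset.sum_congr rfl fun u _ => Finset.sum_congr rfl fun x _ => eN_symm hsym x u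
  rw [e1, e2]
  ring

lemma crossW_split (hsym : ∀ u v, w u v = w v u) (X : Finset V) (v : V) :
    (∑ u ∈ X, ∑ x ∈ Xᶜ, if u = v ∨ x = v then w u x else 0) = crossDegW w X v := by
  by_cases hv : v ∈ X
  · have hv' : v ∉ Xᶜ := by simp [hv]
    have h1 : ∀ u ∈ X, (∑ x ∈ Xᶜ, if u = v ∨ x = v then w u x else 0)
        = if u = v then ∑ x ∈ Xᶜ, w u x else 0 := by
      intro u _
      by_cases hu : u = v
      · simp only [hu, true_or, if_true]
      · simp only [hu, false_or, if_false]
        apply Finset.sum_eq_zero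
        intro x hx
        have hxv : ¬ (x = v) := fun h => hv' (h ▸ hx)
        simp [hxv]
    rw [Finset.sum_congr rfl h1, Finset.sum_ite_eq' X v, if_pos hv]
    unfold crossDegW
    simp only [hv, true_and, not_true, and_false, or_false]
    rw [← Finset.sum_filter]
    apply Finset.sum_congr
    · ext x; simp
    · intro x _; rfl
  · have h1 : ∀ u ∈ X, (∑ x ∈ Xᶜ, if u = v ∨ x = v then w u x else 0)
        = if v ∈ Xᶜ then w u v else 0 := by
      intro u hu
      have huv : ¬ (u = v) := fun h => hv (h ▸ hu)
      simp only [huv, false_or]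
      exact Finset.sum_ite_eq' Xᶜ v (fun x => w u x)
    have hv' : v ∈ Xᶜ := by simp [hv]
    rw [Finset.sum_congr rfl h1]
    simp only [hv', if_true]
    unfold crossDegW
    simp only [hv, false_and, false_or, not_false_iff, and_true]
    rw [← Finset.sum_filter]
    apply Finset.sum_congr
    · ext x; simp
    · intro x _; exact hsym x v

lemma cutMinus_single (hsym : ∀ u v, w u v = w v u) (X : Finset V) (v : V) :
    cutMinusW w X {v} = cutW w X - crossDegW w X v := by
  rw [← crossW_split hsym X v]
  unfold cutMinusW cutW
  rw [← Finset.sum_sub_distrib]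
  refine Finset.sum_congr rfl fun u _ => ?_
  rw [← Finset.sum_sub_distrib]
  refine Finset.sum_congr rfl fun x _ => ?_
  by_cases h : u = v ∨ x = v
  · have : ¬ (u ∉ ({v} : Finset V) ∧ x ∉ ({v} : Finset V)) := by
      simp only [Finset.mem_singleton]; tauto
    rw [if_neg this, if_pos h]; ring
  · have : u ∉ ({v} : Finset V) ∧ x ∉ ({v} : Finset V) := by
      simp only [Finset.mem_singleton]; tauto
    rw [if_pos this, if_neg h]; ring


lemma aN_le_dN (X : Finset V) (v : V) : aN w X v ≤ dN w v := by
  apply Finset.sum_le_sum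
  intro u _
  split <;> simp

lemma neighbors_card (v : V) : dN w v = (univ.filter fun u => w v u = 1).card := by
  rw [Finset.card_filter]
  rfl

lemma dN_pos_of_edge (hsym : ∀ u v, w u v = w v u) {u v : V} (h : w v u = 1) :
    1 ≤ dN w u := by
  have h1 : eN w u v = 1 := by simp [eN, hsym u v, h]
  calc 1 = eN w u v := h1.symm
    _ ≤ ∑ x, eN w u x := Finset.single_le_sum (fun x _ => Nat.zero_le _) (mem_univ v)

lemma three_le (hsym : ∀ u v, w u v = w v u) (hdiag : ∀ v, w v v = 0)
    {v : V} (hdv : dN w v = 2) : 3 ≤ (univ.filter fun x => 1 ≤ dN w x).card := by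
  have hcard : (univ.filter fun u => w v u = 1).card = 2 := by
    rw [← neighbors_card]; exact hdv
  have hlt : 1 < (univ.filter fun u => w v u = 1).card := by omega
  obtain ⟨u₁, hu₁, u₂, hu₂, h12⟩ := Finset.one_lt_card.mp hlt
  rw [mem_filter] at hu₁ hu₂
  have hne1 : u₁ ≠ v := fun h => by
    rw [h, hdiag v] at hu₁; exact absurd hu₁.2 (by norm_num)
  have hne2 : u₂ ≠ v := fun h => by
    rw [h, hdiag v] at hu₂; exact absurd hu₂.2 (by norm_num)
  have hsub : ({v, u₁, u₂} : Finset V) ⊆ univ.filter fun x => 1 ≤ dN w x := by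
    intro x hx
    rw [mem_filter]
    refine ⟨mem_univ x, ?_⟩
    simp only [Finset.mem_insert, Finset.mem_singleton] at hx
    rcases hx with rfl | rfl | rfl
    · omega
    · exact dN_pos_of_edge hsym hu₁.2
    · exact dN_pos_of_edge hsym hu₂.2
  have h3 : ({v, u₁, u₂} : Finset V).card = 3 := by
    rw [Finset.card_insert_of_notMem (by simp [hne1.symm, hne2.symm]),
      Finset.card_pair h12]
  calc 3 = ({v, u₁, u₂} : Finset V).card := h3.symm
    _ ≤ _ := Finset.card_le_card hsub

lemma parity (hsym : ∀ u v, w u v = w v u) (T : Finset V)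
    (hbe : ∀ v, aN w T v = dN w v) (hd2 : ∀ v, dN w v ≤ 2) (hd1 : ∀ v, dN w v ≠ 1) :
    Even (cN w T) := by
  have hstep1 : ∀ v ∈ T, aN w T v = ∑ u ∈ Tᶜ, eN w v u := by
    intro v hv
    unfold aN
    simp only [hv, true_and, not_true, and_false, or_false]
    rw [← Finset.sum_filter]
    apply Finset.sum_congr
    · ext x; simp
    · intros; rfl
  have hstep2 : ∀ v : V, (∑ u ∈ T, eN w v u) + ∑ u ∈ Tᶜ, eN w v u = dN w v :=
    fun v => Finset.sum_add_sum_compl T _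
  have hstep3 : ∀ v ∈ T, (∑ u ∈ T, eN w v u) = 0 := by
    intro v hv
    have h1 := hstep1 v hv
    have h2 := hstep2 v
    have h3 := hbe v
    omega
  have hstep4 : cN w T = ∑ u ∈ T, dN w u := by
    unfold cN
    apply Finset.sum_congr rfl
    intro u hu
    have := hstep2 u
    have := hstep3 u hu
    omega
  rw [hstep4]
  have : (2 : ℕ) ∣ ∑ u ∈ T, dN w u := by
    apply Finset.dvd_sum
    intro u _
    have := hd2 u
    have := hd1 u
    omega
  obtain ⟨k, hk⟩ := this
  exact ⟨k, by omega⟩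

lemma ft1_le (hsym : ∀ u v, w u v = w v u) (X : Finset V) (v : V) :
    ft1W w X ≤ cutW w X - crossDegW w X v := by
  rw [← cutMinus_single hsym X v]
  exact csInf_le (Set.Finite.bddBelow (Set.finite_range _)) ⟨v, rfl⟩

lemma le_ft1 [Nonempty V] (X : Finset V) (r : ℝ)
    (h : ∀ v, r ≤ cutMinusW w X {v}) : r ≤ ft1W w X :=
  le_csInf (Set.range_nonempty _) (by rintro x ⟨v, rfl⟩; exact h v)

end Stmt8Aux

end Aux

theorem stmt_8 [Nonempty V] (w : V → V → ℝ) (hsym : ∀ u v, w u v = w v u)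
    (h01 : ∀ u v, w u v = 0 ∨ w u v = 1) (hdiag : ∀ v, w v v = 0)
    (hΔ : ∀ v, degW w v ≤ 2)
    (S : Finset V) (hstable : ∀ v, (degW w v - 1) / 2 < crossDegW w S v)
    (Sstar : Finset V) (hopt : ∀ S' : Finset V, ft1W w S' ≤ ft1W w Sstar) :
    ft1W w Sstar / 2 ≤ ft1W w S := by
  classical
  open Stmt8Aux in
  -- natural-number facts
  have hd2 : ∀ v, dN w v ≤ 2 := by
    intro v
    have h := hΔ v
    rw [degW_cast h01] at h
    exact_mod_cast h
  have hstN : ∀ v, dN w v ≤ 2 * aN w S v := by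
    intro v
    have h := hstable v
    rw [degW_cast h01, crossDegW_cast h01] at h
    have h2 : (dN w v : ℝ) < 2 * (aN w S v : ℝ) + 1 := by linarith
    have h3 : dN w v < 2 * aN w S v + 1 := by exact_mod_cast h2
    omega
  have hApos : (∃ v, aN w S v = 2) → 3 ≤ (univ.filter fun v => 1 ≤ dN w v).card := by
    rintro ⟨v, hv⟩
    have hdv : dN w v = 2 := le_antisymm (hd2 v) (hv ▸ aN_le_dN S v)
    exact three_le hsym hdiag hdv
  have hpar : (∀ v, aN w Sstar v = dN w v) → (∀ v, dN w v ≠ 1) → Even (cN w Sstar) :=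
    fun h1 h2 => parity hsym Sstar h1 hd2 h2
  obtain ⟨u₀, hkey⟩ := key_count (dN w) (aN w S) (aN w Sstar) (cN w S) (cN w Sstar)
    (handshake hsym S) (handshake hsym Sstar)
    (aN_le_dN S) (aN_le_dN Sstar) hd2 hstN hApos hpar
  -- to the reals
  have hcast : ((cN w Sstar : ℝ)) + 2 * ((univ.sup (aN w S) : ℕ) : ℝ)
      ≤ 2 * (cN w S : ℝ) + (aN w Sstar u₀ : ℝ) := by exact_mod_cast hkey
  have h1 : ft1W w Sstar ≤ (cN w Sstar : ℝ) - (aN w Sstar u₀ : ℝ) := by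
    have := ft1_le hsym Sstar u₀
    rwa [cutW_cast h01, crossDegW_cast h01] at this
  have h2 : (cN w S : ℝ) - ((univ.sup (aN w S) : ℕ) : ℝ) ≤ ft1W w S := by
    apply le_ft1
    intro v
    rw [cutMinus_single hsym S v, cutW_cast h01, crossDegW_cast h01]
    have hle : aN w S v ≤ univ.sup (aN w S) := Finset.le_sup (mem_univ v)
    have : ((aN w S v : ℕ) : ℝ) ≤ ((univ.sup (aN w S) : ℕ) : ℝ) := by exact_mod_cast hle
    linarith
  linarith
end
end

section
/- Let G=(V,E) be a graph and let G'=(V',E') be obtained from G by adding n+1 new vertices u*, u_1,…,u_n (n=|V|), edges {u*,u_i} for all i, and one edge {u*,v_1} for an arbitrary fixed vertex v_1∈V. Then for the cut S' = S ∪ {u*} (S⊆V any cut of G), the vertex u* is a critical vertex of S' in G' for a single fault: φ(S',G') = C_{S'−u*, G'−u*} = C_{S,G}. -/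
open Finset

noncomputable section

variable {V : Type*} [Fintype V] [DecidableEq V]

/-- The graph `G'` obtained from `G` (given by weights `w` on `V`) by adding a star
with center `u* = Sum.inr none`, leaves `u_i = Sum.inr (some i)` for `i : V`
(`n = |V|` leaves), and one extra edge from `u*` to the fixed vertex `v1 ∈ V`. -/
def wExt (w : V → V → ℝ) (v1 : V) : (V ⊕ Option V) → (V ⊕ Option V) → ℝ
  | Sum.inl a, Sum.inl b => w a b
  | Sum.inl a, Sum.inr none => if a = v1 then 1 else 0
  | Sum.inr none, Sum.inl a => if a = v1 then 1 else 0
  | Sum.inl _, Sum.inr (some _) => 0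
  | Sum.inr (some _), Sum.inl _ => 0
  | Sum.inr none, Sum.inr (some _) => 1
  | Sum.inr (some _), Sum.inr none => 1
  | Sum.inr none, Sum.inr none => 0
  | Sum.inr (some _), Sum.inr (some _) => 0


lemma cut_split' (w : V → V → ℝ) (S F : Finset V) :
    cutW w S = cutMinusW w S F + crossDegSetW w S F := by
  unfold cutW cutMinusW crossDegSetW
  rw [← Finset.sum_add_distrib]
  refine Finset.sum_congr rfl fun u _ => ?_
  rw [← Finset.sum_add_distrib]
  refine Finset.sum_congr rfl fun v _ => ?_
  by_cases h : u ∈ F ∨ v ∈ F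
  · have h' : ¬(u ∉ F ∧ v ∉ F) := by tauto
    simp [h, h']
  · rw [not_or] at h
    simp [h.1, h.2]

lemma crossDeg_mem' (w : V → V → ℝ) {S : Finset V} {v : V} (hv : v ∈ S) :
    crossDegSetW w S {v} = ∑ x ∈ Sᶜ, w v x := by
  unfold crossDegSetW
  rw [Finset.sum_eq_single_of_mem v hv]
  · refine Finset.sum_congr rfl fun x _ => if_pos (Or.inl (Finset.mem_singleton_self v))
  · intro u _ hu
    refine Finset.sum_eq_zero fun x hx => if_neg ?_
    rw [Finset.mem_compl] at hx
    rintro (h | h) <;> rw [Finset.mem_singleton] at h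
    · exact hu h
    · exact hx (h ▸ hv)

lemma crossDeg_not_mem' (w : V → V → ℝ) {S : Finset V} {v : V} (hv : v ∉ S) :
    crossDegSetW w S {v} = ∑ u ∈ S, w u v := by
  unfold crossDegSetW
  refine Finset.sum_congr rfl fun u hu => ?_
  rw [Finset.sum_eq_single_of_mem v (Finset.mem_compl.mpr hv)]
  · exact if_pos (Or.inr (Finset.mem_singleton_self v))
  · intro x _ hx
    refine if_neg ?_
    rintro (h | h) <;> rw [Finset.mem_singleton] at h
    · exact hv (h ▸ hu)
    · exact hx h

lemma crossDeg_le_deg' (w : V → V → ℝ) (hnn : ∀ u v, 0 ≤ w u v)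
    (hsym : ∀ u v, w u v = w v u) (S : Finset V) (v : V) :
    crossDegSetW w S {v} ≤ degW w v := by
  by_cases hv : v ∈ S
  · rw [crossDeg_mem' w hv]
    exact Finset.sum_le_sum_of_subset_of_nonneg (Finset.subset_univ _)
      (fun i _ _ => hnn v i)
  · rw [crossDeg_not_mem' w hv]
    calc ∑ u ∈ S, w u v = ∑ u ∈ S, w v u := Finset.sum_congr rfl fun u _ => hsym u v
    _ ≤ ∑ u, w v u := Finset.sum_le_sum_of_subset_of_nonneg (Finset.subset_univ _)
        (fun i _ _ => hnn v i)

theorem stmt_14 (w : V → V → ℝ) (hsym : ∀ u v, w u v = w v u)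
    (h01 : ∀ u v, w u v = 0 ∨ w u v = 1) (hdiag : ∀ v, w v v = 0)
    (v1 : V) (S : Finset V) :
    ft1W (wExt w v1) (insert (Sum.inr none) (S.image Sum.inl))
        = cutMinusW (wExt w v1) (insert (Sum.inr none) (S.image Sum.inl))
            {Sum.inr none} ∧
      cutMinusW (wExt w v1) (insert (Sum.inr none) (S.image Sum.inl))
          {Sum.inr none} = cutW w S := by

  classical
  have hnVne : Nonempty V := ⟨v1⟩
  set w' := wExt w v1 with hw'
  set S' : Finset (V ⊕ Option V) := insert (Sum.inr none) (S.image Sum.inl) with hS'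
  have hnn : ∀ a b, 0 ≤ w a b := fun a b => by rcases h01 a b with h | h <;> simp [h]
  have hle1 : ∀ a b, w a b ≤ 1 := fun a b => by rcases h01 a b with h | h <;> simp [h]
  have hnn' : ∀ u v, 0 ≤ w' u v := by
    rintro (a | _ | a) (b | _ | b) <;> simp [hw', wExt, hnn] <;> positivity
  have hsym' : ∀ u v, w' u v = w' v u := by
    rintro (a | _ | a) (b | _ | b) <;> simp [hw', wExt] <;> exact hsym a b
  have hne : (Sum.inr none : V ⊕ Option V) ∉ S.image Sum.inl := by simp
  have hmemS' : (Sum.inr none : V ⊕ Option V) ∈ S' := Finset.mem_insert_self _ _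
  have hcompl : S'ᶜ = (Sᶜ.image Sum.inl) ∪
      ((Finset.univ : Finset V).image (fun i => Sum.inr (some i))) := by
    ext x
    rcases x with a | _ | i <;> simp [hS']
  have hdisj : Disjoint (Sᶜ.image Sum.inl)
      ((Finset.univ : Finset V).image (fun i : V => Sum.inr (some i))) := by
    rw [Finset.disjoint_left]
    rintro x hx hy
    simp only [Finset.mem_image] at hx hy
    obtain ⟨a, -, rfl⟩ := hx
    obtain ⟨i, -, h⟩ := hy
    exact absurd h (by simp)
  have hinj : ∀ x ∈ Sᶜ, ∀ y ∈ Sᶜ, (Sum.inl x : V ⊕ Option V) = Sum.inl y → x = y :=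
    fun x _ y _ h => Sum.inl.inj h
  have hinj2 : ∀ x ∈ (Finset.univ : Finset V), ∀ y ∈ (Finset.univ : Finset V),
      (Sum.inr (some x) : V ⊕ Option V) = Sum.inr (some y) → x = y :=
    fun x _ y _ h => by simpa using h
  -- Part 2 : cutMinusW w' S' {inr none} = cutW w S
  have hA : cutMinusW w' S' {Sum.inr none} = cutW w S := by
    unfold cutMinusW cutW
    rw [hS', Finset.sum_insert hne,
      Finset.sum_image (fun x _ y _ h => Sum.inl.inj h)]
    have h0 : (∑ x ∈ S'ᶜ, if (Sum.inr none : V ⊕ Option V) ∉ ({Sum.inr none} : Finset _)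
        ∧ x ∉ ({Sum.inr none} : Finset _) then w' (Sum.inr none) x else 0) = 0 :=
      Finset.sum_eq_zero fun x _ => if_neg (fun h => h.1 (Finset.mem_singleton_self _))
    rw [← hS', h0, zero_add]
    refine Finset.sum_congr rfl fun a _ => ?_
    rw [hcompl, Finset.sum_union hdisj, Finset.sum_image hinj, Finset.sum_image hinj2]
    simp [hw', wExt]
  -- crossing degree of u* is at least n
  have hB : (Fintype.card V : ℝ) ≤ crossDegSetW w' S' {Sum.inr none} := by
    rw [crossDeg_mem' w' hmemS', hcompl, Finset.sum_union hdisj,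
      Finset.sum_image hinj, Finset.sum_image hinj2]
    have h1 : (∑ i : V, w' (Sum.inr none) (Sum.inr (some i))) = (Fintype.card V : ℝ) := by
      simp [hw', wExt]
    have h2 : 0 ≤ ∑ b ∈ Sᶜ, w' (Sum.inr none) (Sum.inl b) :=
      Finset.sum_nonneg fun b _ => hnn' _ _
    linarith
  have hn1 : 1 ≤ (Fintype.card V : ℝ) := by
    exact_mod_cast Fintype.card_pos (α := V)
  -- degrees of all other vertices are at most n
  have hC : ∀ v : V ⊕ Option V, v ≠ Sum.inr none → degW w' v ≤ (Fintype.card V : ℝ) := by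
    rintro (a | _ | i) hv
    · unfold degW
      rw [Fintype.sum_sum_type]
      have hb : ∑ b, w a b ≤ (Fintype.card V : ℝ) - 1 := by
        have h1 : ∑ b ∈ Finset.univ.erase a, w a b = ∑ b, w a b :=
          Finset.sum_erase _ (hdiag a)
        have h2 : ∑ b ∈ Finset.univ.erase a, w a b
            ≤ (Finset.univ.erase a).card • (1 : ℝ) :=
          Finset.sum_le_card_nsmul _ _ 1 (fun x _ => hle1 a x)
        have h3 : (Finset.univ.erase a).card = Fintype.card V - 1 := by
          rw [Finset.card_erase_of_mem (Finset.mem_univ a), Finset.card_univ]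
        rw [h3, nsmul_eq_mul, mul_one] at h2
        have h4 : ((Fintype.card V - 1 : ℕ) : ℝ) = (Fintype.card V : ℝ) - 1 := by
          have : 1 ≤ Fintype.card V := Fintype.card_pos
          push_cast [this]
          ring
        rw [h1, h4] at h2
        exact h2
      have ho : ∑ o : Option V, w' (Sum.inl a) (Sum.inr o) ≤ 1 := by
        rw [Fintype.sum_option]
        simp only [hw', wExt]
        split_ifs <;> simp
      have hiw : ∑ b : V, w' (Sum.inl a) (Sum.inl b) = ∑ b, w a b := rfl
      linarith
    · exact absurd rfl hv
    · unfold degW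
      rw [Fintype.sum_sum_type, Fintype.sum_option]
      simp only [hw', wExt]
      simp [hn1]
  -- key inequality
  have key : ∀ v : V ⊕ Option V,
      cutMinusW w' S' {Sum.inr none} ≤ cutMinusW w' S' {v} := by
    intro v
    have e1 := cut_split' w' S' {Sum.inr none}
    have e2 := cut_split' w' S' {v}
    by_cases hv : v = Sum.inr none
    · subst hv; linarith
    · have h1 : crossDegSetW w' S' {v} ≤ degW w' v :=
        crossDeg_le_deg' w' hnn' hsym' S' v
      have h2 := hC v hv
      linarith
  refine ⟨?_, hA⟩
  unfold ft1W
  apply le_antisymm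
  · exact csInf_le ⟨cutMinusW w' S' {Sum.inr none},
      by rintro x ⟨v, rfl⟩; exact key v⟩ ⟨Sum.inr none, rfl⟩
  · exact le_csInf (Set.range_nonempty _) (by rintro x ⟨v, rfl⟩; exact key v)
end
end

section
/- With G' constructed from G by adding a star with center u* and n leaves plus an edge {u*,v_1}: the optimal single-fault adaptive FT value in G' equals the maximum cut value in G, i.e., max_{S'⊆V'} φ(S',G') = max_{S⊆V} C_{S,G}. -/
open Finset

noncomputable section

variable {V : Type*} [Fintype V] [DecidableEq V]

lemma sum_mem_eq_aux (S : Finset V) (f : V → ℝ) :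
    ∑ u ∈ S, f u = ∑ u, if u ∈ S then f u else 0 := by
  simp [Finset.sum_ite_mem]

lemma cutMinusW_expand (w : V → V → ℝ) (S F : Finset V) :
    cutMinusW w S F
      = ∑ u, ∑ v, if u ∈ S ∧ v ∉ S ∧ u ∉ F ∧ v ∉ F then w u v else 0 := by
  unfold cutMinusW
  rw [sum_mem_eq_aux]
  refine Finset.sum_congr rfl fun u _ => ?_
  split_ifs with h
  · rw [sum_mem_eq_aux]
    refine Finset.sum_congr rfl fun v _ => ?_
    simp only [Finset.mem_compl]
    split_ifs <;> tauto
  · exact (Finset.sum_eq_zero fun v _ => by split_ifs <;> tauto).symm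

lemma cutW_expand (w : V → V → ℝ) (S : Finset V) :
    cutW w S = ∑ u, ∑ v, if u ∈ S ∧ v ∉ S then w u v else 0 := by
  unfold cutW
  rw [sum_mem_eq_aux]
  refine Finset.sum_congr rfl fun u _ => ?_
  split_ifs with h
  · rw [sum_mem_eq_aux]
    refine Finset.sum_congr rfl fun v _ => ?_
    simp only [Finset.mem_compl]
    split_ifs <;> tauto
  · exact (Finset.sum_eq_zero fun v _ => by split_ifs <;> tauto).symm

lemma upper_aux (w : V → V → ℝ) (v1 : V) (S' : Finset (V ⊕ Option V)) :
    cutMinusW (wExt w v1) S' {Sum.inr none}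
      = cutW w (univ.filter fun a => Sum.inl a ∈ S') := by
  rw [cutMinusW_expand, cutW_expand]
  simp [Fintype.sum_sum_type, Fintype.sum_option, wExt]

lemma lower_aux (w : V → V → ℝ) (hw0 : ∀ u v, 0 ≤ w u v) (hw1 : ∀ u v, w u v ≤ 1)
    (hdiag : ∀ v, w v v = 0) (v1 : V) (S : Finset V) (x : V ⊕ Option V) :
    cutW w S ≤ cutMinusW (wExt w v1) (S.image Sum.inl ∪ {Sum.inr none}) {x} := by
  rw [cutMinusW_expand, cutW_expand]
  match x with
  | Sum.inr none =>
    simp [Fintype.sum_sum_type, Fintype.sum_option, wExt]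
  | Sum.inr (some j) =>
    simp [Fintype.sum_sum_type, Fintype.sum_option, wExt]
    have h1 : (0:ℝ) ≤ ∑ a : V, if a ∈ S then 0 else if a = v1 then (1:ℝ) else 0 := by
      apply Finset.sum_nonneg; intro a _; split_ifs <;> norm_num
    have h2 : (0:ℝ) ≤ ∑ i : V, if i = j then 0 else (1:ℝ) := by
      apply Finset.sum_nonneg; intro a _; split_ifs <;> norm_num
    linarith
  | Sum.inl a =>
    simp [Fintype.sum_sum_type, Fintype.sum_option, wExt]
    have hsplit : ∀ u v : V, (if u ∈ S ∧ v ∉ S then w u v else 0)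
        = (if u ∈ S ∧ v ∉ S ∧ ¬u = a ∧ ¬v = a then w u v else 0)
          + (if u ∈ S ∧ v ∉ S ∧ (u = a ∨ v = a) then w u v else 0) := by
      intro u v
      by_cases hu : u = a
      · subst hu
        split_ifs <;> simp_all
      · split_ifs <;> simp_all
    have hD : (∑ u : V, ∑ v : V, if u ∈ S ∧ v ∉ S ∧ (u = a ∨ v = a) then w u v else 0)
        ≤ (Fintype.card V : ℝ) := by
      by_cases ha : a ∈ S
      · calc (∑ u : V, ∑ v : V, if u ∈ S ∧ v ∉ S ∧ (u = a ∨ v = a) then w u v else 0)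
            ≤ ∑ u : V, ∑ v : V, if u = a then w u v else 0 := by
              refine Finset.sum_le_sum fun u _ => Finset.sum_le_sum fun v _ => ?_
              split_ifs with h1 h2 h2
              · exact le_refl _
              · rcases h1 with ⟨hus, hvs, hc⟩
                rcases hc with rfl | rfl
                · exact absurd rfl h2
                · exact absurd ha hvs
              · exact hw0 u v
              · exact le_refl _
          _ = ∑ v : V, w a v := by
              rw [Finset.sum_comm]
              refine Finset.sum_congr rfl fun v _ => ?_
              simp
          _ ≤ ∑ _v : V, (1:ℝ) := Finset.sum_le_sum fun v _ => hw1 a v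
          _ = (Fintype.card V : ℝ) := by simp
      · calc (∑ u : V, ∑ v : V, if u ∈ S ∧ v ∉ S ∧ (u = a ∨ v = a) then w u v else 0)
            ≤ ∑ u : V, ∑ v : V, if v = a then w u v else 0 := by
              refine Finset.sum_le_sum fun u _ => Finset.sum_le_sum fun v _ => ?_
              split_ifs with h1 h2 h2
              · exact le_refl _
              · rcases h1 with ⟨hus, hvs, hc⟩
                rcases hc with rfl | rfl
                · exact absurd hus ha
                · exact absurd rfl h2
              · exact hw0 u v
              · exact le_refl _
          _ = ∑ u : V, w u a := by
              refine Finset.sum_congr rfl fun u _ => ?_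
              simp
          _ ≤ ∑ _u : V, (1:ℝ) := Finset.sum_le_sum fun u _ => hw1 u a
          _ = (Fintype.card V : ℝ) := by simp
    have hT4 : (0:ℝ) ≤ ∑ b : V, if b ∉ S ∧ ¬b = a then if b = v1 then (1:ℝ) else 0 else 0 := by
      apply Finset.sum_nonneg; intro b _; split_ifs <;> norm_num
    have hLHS : (∑ u : V, ∑ v : V, if u ∈ S ∧ v ∉ S then w u v else 0)
        = (∑ u : V, ∑ v : V, if u ∈ S ∧ v ∉ S ∧ ¬u = a ∧ ¬v = a then w u v else 0)
          + (∑ u : V, ∑ v : V, if u ∈ S ∧ v ∉ S ∧ (u = a ∨ v = a) then w u v else 0) := by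
      rw [← Finset.sum_add_distrib]
      refine Finset.sum_congr rfl fun u _ => ?_
      rw [← Finset.sum_add_distrib]
      exact Finset.sum_congr rfl fun v _ => hsplit u v
    rw [hLHS]
    linarith

theorem stmt_15 (w : V → V → ℝ) (hsym : ∀ u v, w u v = w v u)
    (h01 : ∀ u v, w u v = 0 ∨ w u v = 1) (hdiag : ∀ v, w v v = 0)
    (v1 : V) :
    sSup (Set.range fun S' : Finset (V ⊕ Option V) => ft1W (wExt w v1) S')
      = sSup (Set.range fun S : Finset V => cutW w S) := by
  have hw0 : ∀ u v, 0 ≤ w u v := fun u v => by rcases h01 u v with h | h <;> rw [h] <;> norm_num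
  have hw1 : ∀ u v, w u v ≤ 1 := fun u v => by rcases h01 u v with h | h <;> rw [h] <;> norm_num
  have bddL : BddAbove (Set.range fun S' : Finset (V ⊕ Option V) => ft1W (wExt w v1) S') :=
    (Set.finite_range _).bddAbove
  have bddR : BddAbove (Set.range fun S : Finset V => cutW w S) :=
    (Set.finite_range _).bddAbove
  apply le_antisymm
  · refine csSup_le (Set.range_nonempty _) ?_
    rintro x ⟨S', rfl⟩
    calc ft1W (wExt w v1) S'
        ≤ cutMinusW (wExt w v1) S' {Sum.inr none} :=
          csInf_le (Set.finite_range _).bddBelow ⟨Sum.inr none, rfl⟩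
      _ = cutW w (univ.filter fun a => Sum.inl a ∈ S') := upper_aux w v1 S'
      _ ≤ sSup (Set.range fun S : Finset V => cutW w S) := le_csSup bddR ⟨_, rfl⟩
  · refine csSup_le (Set.range_nonempty _) ?_
    rintro x ⟨S, rfl⟩
    calc cutW w S
        ≤ ft1W (wExt w v1) (S.image Sum.inl ∪ {Sum.inr none}) := by
          refine le_csInf ⟨_, ⟨Sum.inr none, rfl⟩⟩ ?_
          rintro b ⟨v, rfl⟩
          exact lower_aux w hw0 hw1 hdiag v1 S v
      _ ≤ sSup (Set.range fun S' : Finset (V ⊕ Option V) => ft1W (wExt w v1) S') :=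
          le_csSup bddL ⟨_, rfl⟩
end
end

section
/- For every ε>0 and every n ≥ max(4, 3/(4ε)), there exists a weighted n-vertex graph G such that for a uniformly random cut S, E[φ(S)] ≤ (1/4+ε)·φ(S*), where S* is an optimal single-fault adaptive fault tolerant cut. Specifically, G is an n-cycle with two non-adjacent edges of weight n(n−3) and all other edges of weight 1; the optimal FT value is at least n(n−3), while E[φ(S)] ≤ (1/4)·φ(S*) + (3/4)(n−3). -/
open Finset

noncomputable section

variable {V : Type*} [Fintype V] [DecidableEq V]

/- ### Auxiliary material for `stmt_16` -/

set_option linter.unusedSectionVars false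

/-- generic: one term lower-bounds a nonneg double sum -/
lemma term_le_dsum' (f : V → V → ℝ) (hf : ∀ u v, 0 ≤ f u v) {s t : Finset V} {a b : V}
    (ha : a ∈ s) (hb : b ∈ t) : f a b ≤ ∑ u ∈ s, ∑ v ∈ t, f u v := by
  calc f a b ≤ ∑ v ∈ t, f a v := Finset.single_le_sum (fun v _ => hf a v) hb
    _ ≤ ∑ u ∈ s, ∑ v ∈ t, f u v :=
      Finset.single_le_sum (fun u _ => Finset.sum_nonneg fun v _ => hf u v) ha

/-- halving lemma for symmetric nonneg kernels -/
lemma dsum_cut_le_half' (f : V → V → ℝ) (hf : ∀ u v, 0 ≤ f u v)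
    (hsymm : ∀ u v, f u v = f v u) (S : Finset V) :
    ∑ u ∈ S, ∑ v ∈ Sᶜ, f u v ≤ (∑ u, ∑ v, f u v) / 2 := by
  have key : ∑ u ∈ S, ∑ v ∈ Sᶜ, f u v + ∑ u ∈ Sᶜ, ∑ v ∈ S, f u v ≤ ∑ u, ∑ v, f u v := by
    have h1 : ∀ u : V, ∑ v ∈ Sᶜ, f u v ≤ ∑ v, f u v := fun u =>
      Finset.sum_le_sum_of_subset_of_nonneg (Finset.subset_univ _) (fun v _ _ => hf u v)
    have h2 : ∀ u : V, ∑ v ∈ S, f u v ≤ ∑ v, f u v := fun u =>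
      Finset.sum_le_sum_of_subset_of_nonneg (Finset.subset_univ _) (fun v _ _ => hf u v)
    calc ∑ u ∈ S, ∑ v ∈ Sᶜ, f u v + ∑ u ∈ Sᶜ, ∑ v ∈ S, f u v
        ≤ ∑ u ∈ S, ∑ v, f u v + ∑ u ∈ Sᶜ, ∑ v, f u v :=
          add_le_add (Finset.sum_le_sum fun u _ => h1 u) (Finset.sum_le_sum fun u _ => h2 u)
      _ = ∑ u, ∑ v, f u v := Finset.sum_add_sum_compl S _
  have heq : ∑ u ∈ Sᶜ, ∑ v ∈ S, f u v = ∑ u ∈ S, ∑ v ∈ Sᶜ, f u v := by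
    rw [Finset.sum_comm]
    exact Finset.sum_congr rfl fun u _ => Finset.sum_congr rfl fun v _ => hsymm v u
  rw [heq] at key
  linarith

lemma flipCut_flipCut' (S : Finset V) (v : V) : flipCut (flipCut S v) v = S := by
  unfold flipCut
  by_cases h : v ∈ S
  · rw [if_pos h, if_neg (Finset.notMem_erase v S), Finset.insert_erase h]
  · rw [if_neg h, if_pos (Finset.mem_insert_self v S), Finset.erase_insert h]

lemma mem_flipCut_self' (S : Finset V) (v : V) : v ∈ flipCut S v ↔ v ∉ S := by
  unfold flipCut
  by_cases h : v ∈ S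
  · simp [h]
  · simp [h]

lemma mem_flipCut_ne' (S : Finset V) {x v : V} (h : x ≠ v) : x ∈ flipCut S v ↔ x ∈ S := by
  unfold flipCut
  by_cases hv : v ∈ S
  · rw [if_pos hv, Finset.mem_erase]; simp [h]
  · rw [if_neg hv, Finset.mem_insert]; simp [h]

lemma card_filter_flip' (a : V) (P Q : Finset V → Prop)
    [DecidablePred P] [DecidablePred Q]
    (hP : ∀ S, P (flipCut S a) ↔ ¬ P S) (hQ : ∀ S, Q (flipCut S a) ↔ Q S) :
    ((univ : Finset (Finset V)).filter (fun S => P S ∧ Q S)).card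
      = ((univ : Finset (Finset V)).filter (fun S => ¬ P S ∧ Q S)).card := by
  apply Finset.card_bij' (fun S _ => flipCut S a) (fun S _ => flipCut S a)
  · intro S hS
    rw [Finset.mem_filter] at hS ⊢
    refine ⟨Finset.mem_univ _, fun hp => ((hP S).mp hp) hS.2.1, (hQ S).mpr hS.2.2⟩
  · intro S hS
    rw [Finset.mem_filter] at hS ⊢
    exact ⟨Finset.mem_univ _, (hP S).mpr hS.2.1, (hQ S).mpr hS.2.2⟩
  · intro S _; exact flipCut_flipCut' S a
  · intro S _; exact flipCut_flipCut' S a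

/- cycle weights -/

def wC (n : ℕ) (u v : Fin n) : ℝ :=
  if (v.val = u.val + 1 ∨ u.val = v.val + 1 ∨ (u.val = 0 ∧ v.val = n - 1) ∨ (v.val = 0 ∧ u.val = n - 1)) then
    (if ((u.val = 0 ∧ v.val = 1) ∨ (u.val = 1 ∧ v.val = 0) ∨ (u.val = 2 ∧ v.val = 3) ∨ (u.val = 3 ∧ v.val = 2))
      then (n : ℝ) * ((n : ℝ) - 3) else 1)
  else 0

def LC (n : ℕ) (u v : Fin n) : ℝ :=
  if ((v.val = u.val + 1 ∨ u.val = v.val + 1 ∨ (u.val = 0 ∧ v.val = n - 1) ∨ (v.val = 0 ∧ u.val = n - 1))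
      ∧ ¬((u.val = 0 ∧ v.val = 1) ∨ (u.val = 1 ∧ v.val = 0) ∨ (u.val = 2 ∧ v.val = 3) ∨ (u.val = 3 ∧ v.val = 2))
      ∧ ¬((u.val = 1 ∧ v.val = 2) ∨ (u.val = 2 ∧ v.val = 1))) then 1 else 0

lemma adj_symm_iff (n : ℕ) (u v : Fin n) :
    (v.val = u.val + 1 ∨ u.val = v.val + 1 ∨ (u.val = 0 ∧ v.val = n - 1) ∨ (v.val = 0 ∧ u.val = n - 1))
      ↔ (u.val = v.val + 1 ∨ v.val = u.val + 1 ∨ (v.val = 0 ∧ u.val = n - 1) ∨ (u.val = 0 ∧ v.val = n - 1)) := by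
  constructor <;> rintro (h|h|h|h)
  exacts [Or.inr (Or.inl h), Or.inl h, Or.inr (Or.inr (Or.inr h)), Or.inr (Or.inr (Or.inl h)),
    Or.inr (Or.inl h), Or.inl h, Or.inr (Or.inr (Or.inr h)), Or.inr (Or.inr (Or.inl h))]

lemma heavy_symm_iff (n : ℕ) (u v : Fin n) :
    ((u.val = 0 ∧ v.val = 1) ∨ (u.val = 1 ∧ v.val = 0) ∨ (u.val = 2 ∧ v.val = 3) ∨ (u.val = 3 ∧ v.val = 2))
      ↔ ((v.val = 0 ∧ u.val = 1) ∨ (v.val = 1 ∧ u.val = 0) ∨ (v.val = 2 ∧ u.val = 3) ∨ (v.val = 3 ∧ u.val = 2)) := by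
  constructor <;> rintro (⟨a, b⟩|⟨a, b⟩|⟨a, b⟩|⟨a, b⟩)
  exacts [Or.inr (Or.inl ⟨b, a⟩), Or.inl ⟨b, a⟩, Or.inr (Or.inr (Or.inr ⟨b, a⟩)), Or.inr (Or.inr (Or.inl ⟨b, a⟩)),
    Or.inr (Or.inl ⟨b, a⟩), Or.inl ⟨b, a⟩, Or.inr (Or.inr (Or.inr ⟨b, a⟩)), Or.inr (Or.inr (Or.inl ⟨b, a⟩))]

lemma mid_symm_iff (n : ℕ) (u v : Fin n) :
    ((u.val = 1 ∧ v.val = 2) ∨ (u.val = 2 ∧ v.val = 1)) ↔ ((v.val = 1 ∧ u.val = 2) ∨ (v.val = 2 ∧ u.val = 1)) := by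
  constructor <;> rintro (⟨a, b⟩|⟨a, b⟩)
  exacts [Or.inr ⟨b, a⟩, Or.inl ⟨b, a⟩, Or.inr ⟨b, a⟩, Or.inl ⟨b, a⟩]

lemma wC_symm (n : ℕ) (u v : Fin n) : wC n u v = wC n v u := by
  unfold wC
  exact if_congr (adj_symm_iff n u v) (if_congr (heavy_symm_iff n u v) rfl rfl) rfl

lemma LC_symm (n : ℕ) (u v : Fin n) : LC n u v = LC n v u := by
  unfold LC
  exact if_congr (by rw [adj_symm_iff n u v, heavy_symm_iff n u v, mid_symm_iff n u v]) rfl rfl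

lemma LC_nonneg (n : ℕ) (u v : Fin n) : 0 ≤ LC n u v := by
  unfold LC; split <;> norm_num

lemma LC_le_one (n : ℕ) (u v : Fin n) : LC n u v ≤ 1 := by
  unfold LC; split <;> norm_num

lemma wC_nonneg {n : ℕ} (hn : 4 ≤ n) (u v : Fin n) : 0 ≤ wC n u v := by
  have h3 : (4:ℝ) ≤ (n:ℝ) := by exact_mod_cast hn
  unfold wC
  split
  · split
    · nlinarith
    · norm_num
  · exact le_refl 0

lemma wC_diag {n : ℕ} (hn : 4 ≤ n) (v : Fin n) : wC n v v = 0 := by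
  unfold wC
  rw [if_neg (by omega)]

lemma LC_row_le {n : ℕ} (hn : 4 ≤ n) (u : Fin n) :
    ∑ v, LC n u v ≤ (if u.val = 1 ∨ u.val = 2 then 0 else if u.val = 0 ∨ u.val = 3 then 1 else 2 : ℝ) := by
  have hbound : ∀ (N : Finset (Fin n)), (∀ v, v ∉ N → LC n u v = 0) →
      ∑ v, LC n u v ≤ (N.card : ℝ) := by
    intro N hz
    have : ∑ v, LC n u v = ∑ v ∈ N, LC n u v :=
      (Finset.sum_subset (Finset.subset_univ N) (fun x _ hx => hz x hx)).symm
    rw [this]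
    calc ∑ v ∈ N, LC n u v ≤ ∑ v ∈ N, (1:ℝ) := Finset.sum_le_sum fun v _ => LC_le_one n u v
      _ = N.card := by simp
  by_cases h12 : u.val = 1 ∨ u.val = 2
  · rw [if_pos h12]
    have h := hbound ∅ (fun v _ => by
      have hv' := v.isLt
      unfold LC; rw [if_neg (by omega)])
    simpa using h
  · rw [if_neg h12]
    push_neg at h12
    by_cases h03 : u.val = 0 ∨ u.val = 3
    · rw [if_pos h03]
      rcases h03 with h0 | h3
      · have hlt1 : n - 1 < n := by omega
        have h := hbound {⟨n-1, hlt1⟩} (fun v hv => by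
          rw [Finset.mem_singleton, Fin.ext_iff] at hv
          simp only [Fin.val_mk] at hv
          have hv' := v.isLt
          unfold LC; rw [if_neg (by omega)])
        simpa using h
      · by_cases hn4 : n = 4
        · have hlt1 : 0 < n := by omega
          have h := hbound {⟨0, hlt1⟩} (fun v hv => by
            rw [Finset.mem_singleton, Fin.ext_iff] at hv
            simp only [Fin.val_mk] at hv
            have hv' := v.isLt
            unfold LC; rw [if_neg (by omega)])
          simpa using h
        · have hlt1 : 4 < n := by omega
          have h := hbound {⟨4, hlt1⟩} (fun v hv => by
            rw [Finset.mem_singleton, Fin.ext_iff] at hv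
            simp only [Fin.val_mk] at hv
            have hv' := v.isLt
            unfold LC; rw [if_neg (by omega)])
          simpa using h
    · rw [if_neg h03]
      push_neg at h03
      have hu4 : 4 ≤ u.val := by
        have := u.isLt; omega
      have hult := u.isLt
      by_cases hlast : u.val = n - 1
      · have hlt1 : u.val - 1 < n := by omega
        have hlt2 : 0 < n := by omega
        have h := hbound {⟨u.val - 1, hlt1⟩, ⟨0, hlt2⟩} (fun v hv => by
          rw [Finset.mem_insert, Finset.mem_singleton, Fin.ext_iff, Fin.ext_iff] at hv
          push_neg at hv
          simp only [Fin.val_mk] at hv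
          have hv' := v.isLt
          unfold LC; rw [if_neg (by omega)])
        refine h.trans ?_
        have hc : ({⟨u.val - 1, hlt1⟩, ⟨0, hlt2⟩} : Finset (Fin n)).card ≤ 2 := by
          apply le_trans (Finset.card_insert_le _ _); simp
        exact_mod_cast hc
      · have hlt1 : u.val - 1 < n := by omega
        have hlt2 : u.val + 1 < n := by omega
        have h := hbound {⟨u.val - 1, hlt1⟩, ⟨u.val + 1, hlt2⟩} (fun v hv => by
          rw [Finset.mem_insert, Finset.mem_singleton, Fin.ext_iff, Fin.ext_iff] at hv
          push_neg at hv
          simp only [Fin.val_mk] at hv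
          have hv' := v.isLt
          unfold LC; rw [if_neg (by omega)])
        refine h.trans ?_
        have hc : ({⟨u.val - 1, hlt1⟩, ⟨u.val + 1, hlt2⟩} : Finset (Fin n)).card ≤ 2 := by
          apply le_trans (Finset.card_insert_le _ _); simp
        exact_mod_cast hc

lemma LC_total {n : ℕ} (hn : 4 ≤ n) :
    ∑ u : Fin n, ∑ v, LC n u v ≤ 2 * (n : ℝ) - 6 := by
  have step1 : ∑ u : Fin n, ∑ v, LC n u v ≤
      ∑ u : Fin n, (if u.val = 1 ∨ u.val = 2 then 0 else if u.val = 0 ∨ u.val = 3 then 1 else 2 : ℝ) :=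
    Finset.sum_le_sum fun u _ => LC_row_le hn u
  refine step1.trans ?_
  have step2 : ∑ u : Fin n, (if u.val = 1 ∨ u.val = 2 then 0 else if u.val = 0 ∨ u.val = 3 then 1 else 2 : ℝ)
      = ∑ k ∈ Finset.range n, (if k = 1 ∨ k = 2 then 0 else if k = 0 ∨ k = 3 then 1 else 2 : ℝ) := by
    rw [← Fin.sum_univ_eq_sum_range]
  rw [step2]
  have step3 : ∀ k ∈ Finset.range n, (if k = 1 ∨ k = 2 then 0 else if k = 0 ∨ k = 3 then 1 else 2 : ℝ)
      = 2 - (if k = 1 ∨ k = 2 then 2 else if k = 0 ∨ k = 3 then 1 else 0 : ℝ) := by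
    intro k _
    by_cases h1 : k = 1 ∨ k = 2
    · simp [h1]
    · by_cases h2 : k = 0 ∨ k = 3 <;> simp [h1, h2] <;> norm_num
  rw [Finset.sum_congr rfl step3, Finset.sum_sub_distrib]
  have hc : ∑ _k ∈ Finset.range n, (2:ℝ) = 2 * n := by
    simp [mul_comm]
  have hs : ∑ k ∈ Finset.range n, (if k = 1 ∨ k = 2 then 2 else if k = 0 ∨ k = 3 then 1 else 0 : ℝ) = 6 := by
    rw [← Finset.sum_subset (Finset.range_subset_range.mpr hn)
      (fun x _ hx => by rw [Finset.mem_range] at hx; push_neg at hx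
                        rw [if_neg (by omega), if_neg (by omega)])]
    norm_num [Finset.sum_range_succ]
  rw [hc, hs]

lemma cutMinus_nonneg' {n : ℕ} (hn : 4 ≤ n) (S F : Finset (Fin n)) :
    0 ≤ cutMinusW (wC n) S F := by
  unfold cutMinusW
  refine Finset.sum_nonneg fun u _ => Finset.sum_nonneg fun v _ => ?_
  split
  · exact wC_nonneg hn u v
  · exact le_refl 0

lemma ft1W_le_cutMinus' {n : ℕ} (hn : 4 ≤ n) (S : Finset (Fin n)) (v : Fin n) :
    ft1W (wC n) S ≤ cutMinusW (wC n) S {v} :=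
  csInf_le ⟨0, by rintro x ⟨u, rfl⟩; exact cutMinus_nonneg' hn S {u}⟩ ⟨v, rfl⟩

lemma le_ft1W' {n : ℕ} (hn : 4 ≤ n) (S : Finset (Fin n)) (c : ℝ)
    (h : ∀ v : Fin n, c ≤ cutMinusW (wC n) S {v}) : c ≤ ft1W (wC n) S := by
  have h0 : (0:ℕ) < n := by omega
  refine le_csInf ⟨_, ⟨(⟨0, h0⟩ : Fin n), rfl⟩⟩ ?_
  rintro x ⟨v, rfl⟩
  exact h v

end


section More
variable {n : ℕ}

lemma lower_bound' (hn : 4 ≤ n) (h0 : 0 < n) (h1 : 1 < n) (h2 : 2 < n) (h3 : 3 < n) :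
    (n:ℝ) * ((n:ℝ) - 3) ≤ ft1W (wC n) {⟨1,h1⟩, ⟨2,h2⟩} := by
  apply le_ft1W' hn
  intro x
  unfold cutMinusW
  have hbody : ∀ u v : Fin n,
      0 ≤ (if u ∉ ({x}:Finset (Fin n)) ∧ v ∉ ({x}:Finset (Fin n)) then wC n u v else 0) := by
    intro u v
    split
    · exact wC_nonneg hn u v
    · exact le_refl 0
  by_cases hx : x.val = 0 ∨ x.val = 1
  · have hmem1 : (⟨2,h2⟩:Fin n) ∈ ({⟨1,h1⟩, ⟨2,h2⟩} : Finset (Fin n)) := by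
      rw [Finset.mem_insert, Finset.mem_singleton]; right; rfl
    have hmem2 : (⟨3,h3⟩:Fin n) ∈ ({⟨1,h1⟩, ⟨2,h2⟩} : Finset (Fin n))ᶜ := by
      rw [Finset.mem_compl, Finset.mem_insert, Finset.mem_singleton, Fin.ext_iff, Fin.ext_iff]
      simp only [Fin.val_mk]
      push_neg
      exact ⟨by omega, by omega⟩
    have hne1 : (⟨2,h2⟩:Fin n) ∉ ({x}:Finset (Fin n)) := by
      rw [Finset.mem_singleton, Fin.ext_iff]; simp only [Fin.val_mk]; omega
    have hne2 : (⟨3,h3⟩:Fin n) ∉ ({x}:Finset (Fin n)) := by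
      rw [Finset.mem_singleton, Fin.ext_iff]; simp only [Fin.val_mk]; omega
    have hval : wC n (⟨2,h2⟩:Fin n) (⟨3,h3⟩:Fin n) = (n:ℝ)*((n:ℝ)-3) := by
      unfold wC
      rw [if_pos (Or.inl rfl), if_pos (Or.inr (Or.inr (Or.inl ⟨rfl, rfl⟩)))]
    have hstep : (n:ℝ)*((n:ℝ)-3) ≤ (if (⟨2,h2⟩:Fin n) ∉ ({x}:Finset (Fin n)) ∧ (⟨3,h3⟩:Fin n) ∉ ({x}:Finset (Fin n))
        then wC n (⟨2,h2⟩:Fin n) (⟨3,h3⟩:Fin n) else 0) := by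
      rw [if_pos ⟨hne1, hne2⟩, hval]
    exact hstep.trans (term_le_dsum' _ hbody hmem1 hmem2)
  · have hmem1 : (⟨1,h1⟩:Fin n) ∈ ({⟨1,h1⟩, ⟨2,h2⟩} : Finset (Fin n)) := Finset.mem_insert_self _ _
    have hmem2 : (⟨0,h0⟩:Fin n) ∈ ({⟨1,h1⟩, ⟨2,h2⟩} : Finset (Fin n))ᶜ := by
      rw [Finset.mem_compl, Finset.mem_insert, Finset.mem_singleton, Fin.ext_iff, Fin.ext_iff]
      simp only [Fin.val_mk]
      push_neg
      exact ⟨by omega, by omega⟩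
    have hne1 : (⟨1,h1⟩:Fin n) ∉ ({x}:Finset (Fin n)) := by
      rw [Finset.mem_singleton, Fin.ext_iff]; simp only [Fin.val_mk]; omega
    have hne2 : (⟨0,h0⟩:Fin n) ∉ ({x}:Finset (Fin n)) := by
      rw [Finset.mem_singleton, Fin.ext_iff]; simp only [Fin.val_mk]; omega
    have hval : wC n (⟨1,h1⟩:Fin n) (⟨0,h0⟩:Fin n) = (n:ℝ)*((n:ℝ)-3) := by
      unfold wC
      rw [if_pos (Or.inr (Or.inl rfl)), if_pos (Or.inr (Or.inl ⟨rfl, rfl⟩))]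
    have hstep : (n:ℝ)*((n:ℝ)-3) ≤ (if (⟨1,h1⟩:Fin n) ∉ ({x}:Finset (Fin n)) ∧ (⟨0,h0⟩:Fin n) ∉ ({x}:Finset (Fin n))
        then wC n (⟨1,h1⟩:Fin n) (⟨0,h0⟩:Fin n) else 0) := by
      rw [if_pos ⟨hne1, hne2⟩, hval]
    exact hstep.trans (term_le_dsum' _ hbody hmem1 hmem2)

lemma pointwise1' (hn : 4 ≤ n) (h0 : 0 < n) (h1 : 1 < n) (h2 : 2 < n)
    (S : Finset (Fin n)) (hQ : ((⟨0,h0⟩:Fin n) ∈ S ↔ (⟨1,h1⟩:Fin n) ∈ S))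
    (u v : Fin n) (hu : u ∈ S) (hv : v ∈ Sᶜ) :
    (if u ∉ ({(⟨2,h2⟩:Fin n)}:Finset (Fin n)) ∧ v ∉ ({(⟨2,h2⟩:Fin n)}:Finset (Fin n)) then wC n u v else 0)
      ≤ LC n u v := by
  rw [Finset.mem_compl] at hv
  by_cases hc : u ∉ ({(⟨2,h2⟩:Fin n)}:Finset (Fin n)) ∧ v ∉ ({(⟨2,h2⟩:Fin n)}:Finset (Fin n))
  case neg => rw [if_neg hc]; exact LC_nonneg n u v
  rw [if_pos hc]
  obtain ⟨hcu, hcv⟩ := hc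
  rw [Finset.mem_singleton] at hcu hcv
  have hcu' : u.val ≠ 2 := fun h => hcu (Fin.ext h)
  have hcv' : v.val ≠ 2 := fun h => hcv (Fin.ext h)
  by_cases hadj : (v.val = u.val + 1 ∨ u.val = v.val + 1 ∨ (u.val = 0 ∧ v.val = n - 1) ∨ (v.val = 0 ∧ u.val = n - 1))
  case neg =>
    have hw : wC n u v = 0 := by unfold wC; rw [if_neg hadj]
    rw [hw]; exact LC_nonneg n u v
  have hheavy : ¬((u.val = 0 ∧ v.val = 1) ∨ (u.val = 1 ∧ v.val = 0) ∨ (u.val = 2 ∧ v.val = 3) ∨ (u.val = 3 ∧ v.val = 2)) := by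
    rintro (⟨a, b⟩|⟨a, b⟩|⟨a, b⟩|⟨a, b⟩)
    · have hu' : u = ⟨0,h0⟩ := Fin.ext a
      have hv' : v = ⟨1,h1⟩ := Fin.ext b
      rw [hu'] at hu; rw [hv'] at hv
      exact hv (hQ.mp hu)
    · have hu' : u = ⟨1,h1⟩ := Fin.ext a
      have hv' : v = ⟨0,h0⟩ := Fin.ext b
      rw [hu'] at hu; rw [hv'] at hv
      exact hv (hQ.mpr hu)
    · exact hcu' a
    · exact hcv' b
  have hmid : ¬((u.val = 1 ∧ v.val = 2) ∨ (u.val = 2 ∧ v.val = 1)) := by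
    rintro (⟨a, b⟩|⟨a, b⟩)
    · exact hcv' b
    · exact hcu' a
  have hw : wC n u v = 1 := by unfold wC; rw [if_pos hadj, if_neg hheavy]
  have hL : LC n u v = 1 := by unfold LC; rw [if_pos ⟨hadj, hheavy, hmid⟩]
  rw [hw, hL]

lemma pointwise2' (hn : 4 ≤ n) (h1 : 1 < n) (h2 : 2 < n) (h3 : 3 < n)
    (S : Finset (Fin n)) (hQ : ((⟨2,h2⟩:Fin n) ∈ S ↔ (⟨3,h3⟩:Fin n) ∈ S))
    (u v : Fin n) (hu : u ∈ S) (hv : v ∈ Sᶜ) :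
    (if u ∉ ({(⟨1,h1⟩:Fin n)}:Finset (Fin n)) ∧ v ∉ ({(⟨1,h1⟩:Fin n)}:Finset (Fin n)) then wC n u v else 0)
      ≤ LC n u v := by
  rw [Finset.mem_compl] at hv
  by_cases hc : u ∉ ({(⟨1,h1⟩:Fin n)}:Finset (Fin n)) ∧ v ∉ ({(⟨1,h1⟩:Fin n)}:Finset (Fin n))
  case neg => rw [if_neg hc]; exact LC_nonneg n u v
  rw [if_pos hc]
  obtain ⟨hcu, hcv⟩ := hc
  rw [Finset.mem_singleton] at hcu hcv
  have hcu' : u.val ≠ 1 := fun h => hcu (Fin.ext h)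
  have hcv' : v.val ≠ 1 := fun h => hcv (Fin.ext h)
  by_cases hadj : (v.val = u.val + 1 ∨ u.val = v.val + 1 ∨ (u.val = 0 ∧ v.val = n - 1) ∨ (v.val = 0 ∧ u.val = n - 1))
  case neg =>
    have hw : wC n u v = 0 := by unfold wC; rw [if_neg hadj]
    rw [hw]; exact LC_nonneg n u v
  have hheavy : ¬((u.val = 0 ∧ v.val = 1) ∨ (u.val = 1 ∧ v.val = 0) ∨ (u.val = 2 ∧ v.val = 3) ∨ (u.val = 3 ∧ v.val = 2)) := by
    rintro (⟨a, b⟩|⟨a, b⟩|⟨a, b⟩|⟨a, b⟩)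
    · exact hcv' b
    · exact hcu' a
    · have hu' : u = ⟨2,h2⟩ := Fin.ext a
      have hv' : v = ⟨3,h3⟩ := Fin.ext b
      rw [hu'] at hu; rw [hv'] at hv
      exact hv (hQ.mp hu)
    · have hu' : u = ⟨3,h3⟩ := Fin.ext a
      have hv' : v = ⟨2,h2⟩ := Fin.ext b
      rw [hu'] at hu; rw [hv'] at hv
      exact hv (hQ.mpr hu)
  have hmid : ¬((u.val = 1 ∧ v.val = 2) ∨ (u.val = 2 ∧ v.val = 1)) := by
    rintro (⟨a, b⟩|⟨a, b⟩)
    · exact hcu' a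
    · exact hcv' b
  have hw : wC n u v = 1 := by unfold wC; rw [if_pos hadj, if_neg hheavy]
  have hL : LC n u v = 1 := by unfold LC; rw [if_pos ⟨hadj, hheavy, hmid⟩]
  rw [hw, hL]

lemma upper1' (hn : 4 ≤ n) (h0 : 0 < n) (h1 : 1 < n) (h2 : 2 < n)
    (S : Finset (Fin n)) (hQ : ((⟨0,h0⟩:Fin n) ∈ S ↔ (⟨1,h1⟩:Fin n) ∈ S)) :
    ft1W (wC n) S ≤ (n:ℝ) - 3 := by
  refine (ft1W_le_cutMinus' hn S ⟨2,h2⟩).trans ?_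
  have step1 : cutMinusW (wC n) S {⟨2,h2⟩} ≤ ∑ u ∈ S, ∑ v ∈ Sᶜ, LC n u v := by
    unfold cutMinusW
    exact Finset.sum_le_sum fun u hu => Finset.sum_le_sum fun v hv =>
      pointwise1' hn h0 h1 h2 S hQ u v hu hv
  refine step1.trans ((dsum_cut_le_half' (LC n) (LC_nonneg n) (LC_symm n) S).trans ?_)
  have := LC_total hn
  linarith

lemma upper2' (hn : 4 ≤ n) (h1 : 1 < n) (h2 : 2 < n) (h3 : 3 < n)
    (S : Finset (Fin n)) (hQ : ((⟨2,h2⟩:Fin n) ∈ S ↔ (⟨3,h3⟩:Fin n) ∈ S)) :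
    ft1W (wC n) S ≤ (n:ℝ) - 3 := by
  refine (ft1W_le_cutMinus' hn S ⟨1,h1⟩).trans ?_
  have step1 : cutMinusW (wC n) S {⟨1,h1⟩} ≤ ∑ u ∈ S, ∑ v ∈ Sᶜ, LC n u v := by
    unfold cutMinusW
    exact Finset.sum_le_sum fun u hu => Finset.sum_le_sum fun v hv =>
      pointwise2' hn h1 h2 h3 S hQ u v hu hv
  refine step1.trans ((dsum_cut_le_half' (LC n) (LC_nonneg n) (LC_symm n) S).trans ?_)
  have := LC_total hn
  linarith

end More

section Count
variable {V : Type*} [Fintype V] [DecidableEq V]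

lemma count_quarter' (a b : V) (P1 P2 : Finset V → Prop)
    [DecidablePred P1] [DecidablePred P2]
    (hT1 : ∀ S, P1 (flipCut S a) ↔ ¬ P1 S) (hK2 : ∀ S, P2 (flipCut S a) ↔ P2 S)
    (hT2 : ∀ S, P2 (flipCut S b) ↔ ¬ P2 S) (hK1 : ∀ S, P1 (flipCut S b) ↔ P1 S) :
    4 * ((univ : Finset (Finset V)).filter (fun S => ¬ P1 S ∧ ¬ P2 S)).card = 2 ^ (Fintype.card V) := by
  have e1 : ((univ : Finset (Finset V)).filter (fun S => P1 S ∧ P2 S)).card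
      = ((univ : Finset (Finset V)).filter (fun S => ¬ P1 S ∧ P2 S)).card :=
    card_filter_flip' a P1 P2 hT1 hK2
  have e2 : ((univ : Finset (Finset V)).filter (fun S => P1 S ∧ ¬ P2 S)).card
      = ((univ : Finset (Finset V)).filter (fun S => ¬ P1 S ∧ ¬ P2 S)).card :=
    card_filter_flip' a P1 (fun S => ¬ P2 S) hT1 (fun S => not_congr (hK2 S))
  have e3' : ((univ : Finset (Finset V)).filter (fun S => P2 S ∧ ¬ P1 S)).card
      = ((univ : Finset (Finset V)).filter (fun S => ¬ P2 S ∧ ¬ P1 S)).card :=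
    card_filter_flip' b P2 (fun S => ¬ P1 S) hT2 (fun S => not_congr (hK1 S))
  have e3 : ((univ : Finset (Finset V)).filter (fun S => ¬ P1 S ∧ P2 S)).card
      = ((univ : Finset (Finset V)).filter (fun S => ¬ P1 S ∧ ¬ P2 S)).card := by
    rw [Finset.filter_congr (fun S _ => and_comm (a := ¬ P1 S) (b := P2 S)),
        Finset.filter_congr (fun S _ => and_comm (a := ¬ P1 S) (b := ¬ P2 S))]
    exact e3'
  have htot : (univ : Finset (Finset V)).card = 2 ^ (Fintype.card V) := by
    rw [Finset.card_univ, Fintype.card_finset]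
  have hsplit1 : ((univ : Finset (Finset V)).filter P1).card
      + ((univ : Finset (Finset V)).filter (fun S => ¬ P1 S)).card = 2 ^ (Fintype.card V) := by
    rw [Finset.card_filter_add_card_filter_not, htot]
  have hsplit2 : ((univ : Finset (Finset V)).filter (fun S => P1 S ∧ P2 S)).card
      + ((univ : Finset (Finset V)).filter (fun S => P1 S ∧ ¬ P2 S)).card
      = ((univ : Finset (Finset V)).filter P1).card := by
    rw [← Finset.filter_filter, ← Finset.filter_filter]
    exact Finset.card_filter_add_card_filter_not P2
  have hsplit3 : ((univ : Finset (Finset V)).filter (fun S => ¬ P1 S ∧ P2 S)).card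
      + ((univ : Finset (Finset V)).filter (fun S => ¬ P1 S ∧ ¬ P2 S)).card
      = ((univ : Finset (Finset V)).filter (fun S => ¬ P1 S)).card := by
    rw [← Finset.filter_filter, ← Finset.filter_filter]
    exact Finset.card_filter_add_card_filter_not P2
  omega

lemma avg_quarter' (P : Finset V → Prop) [DecidablePred P] (f : Finset V → ℝ) (fs m : ℝ)
    (hP : ∀ S, P S → f S ≤ fs) (hnP : ∀ S, ¬ P S → f S ≤ m)
    (hcard : 4 * ((univ : Finset (Finset V)).filter P).card = 2 ^ (Fintype.card V)) :
    ∑ S : Finset V, f S ≤ ((2:ℝ) ^ (Fintype.card V)) * ((1/4) * fs + (3/4) * m) := by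
  set A : ℕ := ((univ : Finset (Finset V)).filter P).card with hA
  set B : ℕ := ((univ : Finset (Finset V)).filter (fun S => ¬ P S)).card with hB
  have hcardsplit : A + B = 2 ^ (Fintype.card V) := by
    rw [hA, hB, Finset.card_filter_add_card_filter_not, Finset.card_univ,
      Fintype.card_finset]
  have hBval : B = 3 * A := by omega
  have hsum : ∑ S : Finset V, f S
      = ∑ S ∈ (univ : Finset (Finset V)).filter P, f S
      + ∑ S ∈ (univ : Finset (Finset V)).filter (fun S => ¬ P S), f S :=
    (Finset.sum_filter_add_sum_filter_not univ _ _).symm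
  have hAsum : ∑ S ∈ (univ : Finset (Finset V)).filter P, f S ≤ A • fs := by
    apply Finset.sum_le_card_nsmul
    intro S hS
    rw [Finset.mem_filter] at hS
    exact hP S hS.2
  have hBsum : ∑ S ∈ (univ : Finset (Finset V)).filter (fun S => ¬ P S), f S ≤ B • m := by
    apply Finset.sum_le_card_nsmul
    intro S hS
    rw [Finset.mem_filter] at hS
    exact hnP S hS.2
  have hAR : (A:ℝ) * 4 = 2 ^ (Fintype.card V) := by
    have : ((4 * A : ℕ) : ℝ) = ((2 ^ (Fintype.card V) : ℕ) : ℝ) := by exact_mod_cast congrArg (Nat.cast (R := ℝ)) hcard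
    push_cast at this
    linarith
  have hBR : (B:ℝ) = 3 * (A:ℝ) := by exact_mod_cast congrArg (Nat.cast (R := ℝ)) hBval
  calc ∑ S : Finset V, f S ≤ A • fs + B • m := by rw [hsum]; exact add_le_add hAsum hBsum
    _ = (A:ℝ) * fs + (B:ℝ) * m := by rw [nsmul_eq_mul, nsmul_eq_mul]
    _ = ((1/4) * fs + (3/4) * m) * ((A:ℝ) * 4) := by rw [hBR]; ring
    _ = ((2:ℝ) ^ (Fintype.card V)) * ((1/4) * fs + (3/4) * m) := by rw [hAR]; ring


end Count

theorem stmt_16 (ε : ℝ) (hε : 0 < ε) (n : ℕ) (hn4 : 4 ≤ n)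
    (hnε : 3 / (4 * ε) ≤ (n : ℝ)) :
    ∃ w : Fin n → Fin n → ℝ,
      (∀ u v, w u v = w v u) ∧ (∀ u v, 0 ≤ w u v) ∧ (∀ v, w v v = 0) ∧
      ∀ Sstar : Finset (Fin n),
        (∀ S : Finset (Fin n), ft1W w S ≤ ft1W w Sstar) →
          (n : ℝ) * ((n : ℝ) - 3) ≤ ft1W w Sstar ∧
          (∑ S : Finset (Fin n), ft1W w S) / 2 ^ n
              ≤ (1 / 4) * ft1W w Sstar + (3 / 4) * ((n : ℝ) - 3) ∧
          (∑ S : Finset (Fin n), ft1W w S) / 2 ^ n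
              ≤ (1 / 4 + ε) * ft1W w Sstar := by
  have h0 : 0 < n := by omega
  have h1 : 1 < n := by omega
  have h2 : 2 < n := by omega
  have h3 : 3 < n := by omega
  refine ⟨wC n, wC_symm n, wC_nonneg hn4, wC_diag hn4, ?_⟩
  intro Sstar hopt
  have hfs : (n : ℝ) * ((n : ℝ) - 3) ≤ ft1W (wC n) Sstar :=
    (lower_bound' hn4 h0 h1 h2 h3).trans (hopt _)
  refine ⟨hfs, ?_⟩
  have ne10 : (⟨1,h1⟩:Fin n) ≠ ⟨0,h0⟩ := by simp [Fin.ext_iff]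
  have ne20 : (⟨2,h2⟩:Fin n) ≠ ⟨0,h0⟩ := by simp [Fin.ext_iff]
  have ne30 : (⟨3,h3⟩:Fin n) ≠ ⟨0,h0⟩ := by simp [Fin.ext_iff]
  have ne02 : (⟨0,h0⟩:Fin n) ≠ ⟨2,h2⟩ := by simp [Fin.ext_iff]
  have ne12 : (⟨1,h1⟩:Fin n) ≠ ⟨2,h2⟩ := by simp [Fin.ext_iff]
  have ne32 : (⟨3,h3⟩:Fin n) ≠ ⟨2,h2⟩ := by simp [Fin.ext_iff]
  have hT1 : ∀ S : Finset (Fin n),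
      ((⟨0,h0⟩:Fin n) ∈ flipCut S ⟨0,h0⟩ ↔ (⟨1,h1⟩:Fin n) ∈ flipCut S ⟨0,h0⟩)
        ↔ ¬((⟨0,h0⟩:Fin n) ∈ S ↔ (⟨1,h1⟩:Fin n) ∈ S) := by
    intro S
    rw [mem_flipCut_self', mem_flipCut_ne' S ne10]
    by_cases hA : (⟨0,h0⟩:Fin n) ∈ S <;> by_cases hB : (⟨1,h1⟩:Fin n) ∈ S <;> simp [hA, hB]
  have hK2 : ∀ S : Finset (Fin n),
      ((⟨2,h2⟩:Fin n) ∈ flipCut S ⟨0,h0⟩ ↔ (⟨3,h3⟩:Fin n) ∈ flipCut S ⟨0,h0⟩)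
        ↔ ((⟨2,h2⟩:Fin n) ∈ S ↔ (⟨3,h3⟩:Fin n) ∈ S) := by
    intro S
    rw [mem_flipCut_ne' S ne20, mem_flipCut_ne' S ne30]
  have hT2 : ∀ S : Finset (Fin n),
      ((⟨2,h2⟩:Fin n) ∈ flipCut S ⟨2,h2⟩ ↔ (⟨3,h3⟩:Fin n) ∈ flipCut S ⟨2,h2⟩)
        ↔ ¬((⟨2,h2⟩:Fin n) ∈ S ↔ (⟨3,h3⟩:Fin n) ∈ S) := by
    intro S
    rw [mem_flipCut_self', mem_flipCut_ne' S ne32]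
    by_cases hA : (⟨2,h2⟩:Fin n) ∈ S <;> by_cases hB : (⟨3,h3⟩:Fin n) ∈ S <;> simp [hA, hB]
  have hK1 : ∀ S : Finset (Fin n),
      ((⟨0,h0⟩:Fin n) ∈ flipCut S ⟨2,h2⟩ ↔ (⟨1,h1⟩:Fin n) ∈ flipCut S ⟨2,h2⟩)
        ↔ ((⟨0,h0⟩:Fin n) ∈ S ↔ (⟨1,h1⟩:Fin n) ∈ S) := by
    intro S
    rw [mem_flipCut_ne' S ne02, mem_flipCut_ne' S ne12]
  have hcount := count_quarter' (V := Fin n) ⟨0,h0⟩ ⟨2,h2⟩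
    (fun S => ((⟨0,h0⟩:Fin n) ∈ S ↔ (⟨1,h1⟩:Fin n) ∈ S))
    (fun S => ((⟨2,h2⟩:Fin n) ∈ S ↔ (⟨3,h3⟩:Fin n) ∈ S)) hT1 hK2 hT2 hK1
  rw [Fintype.card_fin] at hcount
  have havg := avg_quarter' (V := Fin n)
    (fun S => ¬((⟨0,h0⟩:Fin n) ∈ S ↔ (⟨1,h1⟩:Fin n) ∈ S) ∧ ¬((⟨2,h2⟩:Fin n) ∈ S ↔ (⟨3,h3⟩:Fin n) ∈ S))
    (fun S => ft1W (wC n) S) (ft1W (wC n) Sstar) ((n:ℝ) - 3)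
    (fun S _ => hopt S)
    (fun S hS => by
      by_cases hp1 : ((⟨0,h0⟩:Fin n) ∈ S ↔ (⟨1,h1⟩:Fin n) ∈ S)
      · exact upper1' hn4 h0 h1 h2 S hp1
      · have hp2 : ((⟨2,h2⟩:Fin n) ∈ S ↔ (⟨3,h3⟩:Fin n) ∈ S) := by
          by_contra hq
          exact hS ⟨hp1, hq⟩
        exact upper2' hn4 h1 h2 h3 S hp2)
    (by rw [Fintype.card_fin]; exact hcount)
  rw [Fintype.card_fin] at havg
  have hgoal2 : (∑ S : Finset (Fin n), ft1W (wC n) S) / 2 ^ n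
      ≤ (1 / 4) * ft1W (wC n) Sstar + (3 / 4) * ((n : ℝ) - 3) := by
    have h2npos : (0:ℝ) < 2 ^ n := by positivity
    rw [div_le_iff₀ h2npos]
    nlinarith [havg]
  refine ⟨hgoal2, hgoal2.trans ?_⟩
  have hεn : 3 / 4 ≤ ε * n := by
    rw [div_le_iff₀ (by positivity)] at hnε
    nlinarith
  have hm1 : (1:ℝ) ≤ (n:ℝ) - 3 := by
    have : (4:ℝ) ≤ (n:ℝ) := by exact_mod_cast hn4
    linarith
  have hkey : (3 / 4) * ((n:ℝ) - 3) ≤ ε * ft1W (wC n) Sstar := by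
    have step1 : (3 / 4) * ((n:ℝ) - 3) ≤ (ε * n) * ((n:ℝ) - 3) := by nlinarith
    have step2 : (ε * n) * ((n:ℝ) - 3) ≤ ε * ft1W (wC n) Sstar := by nlinarith
    linarith
  linarith
end
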